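/- arXiv:2509.09379 — 3 statements merged into one kernel-verified Lean document; each statement's English description precedes it below -/
import Mathlib

section
/- For analytic functions f, g on the unit disk, the Duhamel product satisfies the halved-segment formula: (f ⊛ g)(z) = ∫₀^{z/2} f(z-s)g'(s) ds + ∫₀^{z/2} g(z-s)f'(s) ds + f(z)g(0) + g(z)f(0) − f(z/2)g(z/2). -/
open Complex MeasureTheory Set Metric Filter ENNReal

noncomputable section

/-- The open unit disk in ℂ. -/
def 𝔻 : Set ℂ := Metric.ball (0 : ℂ) 1

/-- Normalized Lebesgue area measure on ℂ, `dA = (1/π) dx dy`. -/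
def dA : Measure ℂ := (ENNReal.ofReal (1 / Real.pi)) • (volume : Measure ℂ)

/-- Line integral `∫₀^z h(s) ds` along the segment from `0` to `z`. -/
def segInt (h : ℂ → ℂ) (z : ℂ) : ℂ := z * ∫ t in (0:ℝ)..1, h ((t : ℂ) * z)

/-- The Duhamel product `(f ⊛ g)(z) = ∫₀^z f'(z-s) g(s) ds + f(0) g(z)`. -/
def duh (f g : ℂ → ℂ) (z : ℂ) : ℂ :=
  segInt (fun s => deriv f (z - s) * g s) z + f 0 * g z

lemma segInt_half (h : ℂ → ℂ) (z : ℂ) :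
    segInt h (z / 2) = z * ∫ t in (0:ℝ)..(1/2 : ℝ), h ((t : ℂ) * z) := by
  unfold segInt
  have h1 : (∫ t in (0:ℝ)..1, h ((t:ℂ) * (z/2)))
      = ∫ t in (0:ℝ)..1, (fun u : ℝ => h ((u:ℂ) * z)) (t / 2) := by
    apply intervalIntegral.integral_congr
    intro t _
    simp only
    congr 1
    push_cast
    ring
  rw [h1, intervalIntegral.integral_comp_div (fun u : ℝ => h ((u:ℂ) * z)) two_ne_zero]
  norm_num
  ring

theorem stmt5 (f g : ℂ → ℂ) (hf : AnalyticOn ℂ f 𝔻) (hg : AnalyticOn ℂ g 𝔻) :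
    ∀ z ∈ 𝔻,
      duh f g z = segInt (fun s => f (z - s) * deriv g s) (z / 2)
        + segInt (fun s => g (z - s) * deriv f s) (z / 2)
        + f z * g 0 + g z * f 0 - f (z / 2) * g (z / 2) := by
  intro z hz
  have hopen : IsOpen 𝔻 := Metric.isOpen_ball
  have hfN : AnalyticOnNhd ℂ f 𝔻 := (hopen.analyticOn_iff_analyticOnNhd).1 hf
  have hgN : AnalyticOnNhd ℂ g 𝔻 := (hopen.analyticOn_iff_analyticOnNhd).1 hg
  have hzlt : ‖z‖ < 1 := by
    simpa [𝔻, Metric.mem_ball, Complex.dist_eq] using hz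
  -- membership of segment points
  have hmem : ∀ t : ℝ, t ∈ Icc (0:ℝ) 1 → ((t:ℂ) * z) ∈ 𝔻 := by
    intro t ht
    simp only [𝔻, Metric.mem_ball, Complex.dist_eq, sub_zero, norm_mul, Complex.norm_real, Real.norm_eq_abs]
    calc |t| * ‖z‖ ≤ 1 * ‖z‖ := by
          apply mul_le_mul_of_nonneg_right _ (norm_nonneg z)
          rw [abs_le]; constructor <;> linarith [ht.1, ht.2]
      _ < 1 := by rwa [one_mul]
  have hmem' : ∀ t : ℝ, t ∈ Icc (0:ℝ) 1 → (z - (t:ℂ) * z) ∈ 𝔻 := by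
    intro t ht
    have e : z - (t:ℂ) * z = ((1 - t : ℝ) : ℂ) * z := by push_cast; ring
    rw [e]
    exact hmem (1 - t) ⟨by linarith [ht.2], by linarith [ht.1]⟩
  -- differentiability
  have hfd : ∀ w ∈ 𝔻, HasDerivAt f (deriv f w) w := fun w hw =>
    ((hfN w hw).differentiableAt).hasDerivAt
  have hgd : ∀ w ∈ 𝔻, HasDerivAt g (deriv g w) w := fun w hw =>
    ((hgN w hw).differentiableAt).hasDerivAt
  -- continuity of functions and derivatives on the disk
  have hfc : ContinuousOn f 𝔻 := hfN.continuousOn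
  have hgc : ContinuousOn g 𝔻 := hgN.continuousOn
  have hdfc : ContinuousOn (deriv f) 𝔻 := (hfN.deriv).continuousOn
  have hdgc : ContinuousOn (deriv g) 𝔻 := (hgN.deriv).continuousOn
  -- continuity of the parametrized maps
  have hcont_seg : Continuous (fun t : ℝ => (t:ℂ) * z) := by continuity
  have hcont_seg' : Continuous (fun t : ℝ => z - (t:ℂ) * z) := by continuity
  have compCont : ∀ (φ : ℂ → ℂ), ContinuousOn φ 𝔻 →
      ContinuousOn (fun t : ℝ => φ ((t:ℂ) * z)) (Icc (0:ℝ) 1) := by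
    intro φ hφ
    exact hφ.comp hcont_seg.continuousOn (fun t ht => hmem t ht)
  have compCont' : ∀ (φ : ℂ → ℂ), ContinuousOn φ 𝔻 →
      ContinuousOn (fun t : ℝ => φ (z - (t:ℂ) * z)) (Icc (0:ℝ) 1) := by
    intro φ hφ
    exact hφ.comp hcont_seg'.continuousOn (fun t ht => hmem' t ht)
  -- the integrand ψ t = f'(tz) g(z - tz) and its reflection
  set ψ : ℝ → ℂ := fun t => deriv f ((t:ℂ) * z) * g (z - (t:ℂ) * z) with hψ
  have hψc : ContinuousOn ψ (Icc (0:ℝ) 1) :=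
    (compCont (deriv f) hdfc).mul (compCont' g hgc)
  have hII : ∀ a b : ℝ, a ∈ Icc (0:ℝ) 1 → b ∈ Icc (0:ℝ) 1 →
      IntervalIntegrable ψ volume a b := by
    intro a b ha hb
    apply (hψc.mono _).intervalIntegrable
    exact Set.uIcc_subset_Icc ha hb
  -- step 1: reflect the full integral
  have refl1 : (∫ t in (0:ℝ)..1, deriv f (z - (t:ℂ) * z) * g ((t:ℂ) * z))
      = ∫ t in (0:ℝ)..1, ψ t := by
    have : (∫ t in (0:ℝ)..1, deriv f (z - (t:ℂ) * z) * g ((t:ℂ) * z))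
        = ∫ t in (0:ℝ)..1, ψ (1 - t) := by
      apply intervalIntegral.integral_congr
      intro t _
      simp only [hψ]
      have e1 : ((1 - t : ℝ) : ℂ) * z = z - (t:ℂ) * z := by push_cast; ring
      rw [e1]; congr 2; ring
    rw [this, intervalIntegral.integral_comp_sub_left ψ 1]
    norm_num
  -- step 2: split at 1/2
  have split : (∫ t in (0:ℝ)..1, ψ t)
      = (∫ t in (0:ℝ)..(1/2:ℝ), ψ t) + ∫ t in (1/2:ℝ)..1, ψ t := by
    rw [intervalIntegral.integral_add_adjacent_intervals
      (hII 0 (1/2) (by norm_num) (by norm_num)) (hII (1/2) 1 (by norm_num) (by norm_num))]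
  -- step 3: reflect the second half
  have refl2 : (∫ t in (1/2:ℝ)..1, ψ t)
      = ∫ t in (0:ℝ)..(1/2:ℝ), deriv f (z - (t:ℂ) * z) * g ((t:ℂ) * z) := by
    have : (∫ t in (0:ℝ)..(1/2:ℝ), deriv f (z - (t:ℂ) * z) * g ((t:ℂ) * z))
        = ∫ t in (0:ℝ)..(1/2:ℝ), ψ (1 - t) := by
      apply intervalIntegral.integral_congr
      intro t _
      simp only [hψ]
      have e1 : ((1 - t : ℝ) : ℂ) * z = z - (t:ℂ) * z := by push_cast; ring
      rw [e1]; congr 2; ring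
    rw [this, intervalIntegral.integral_comp_sub_left ψ 1]
    norm_num
  -- step 4: integration by parts on [0, 1/2]
  have hsub : Set.uIcc (0:ℝ) (1/2:ℝ) ⊆ Icc (0:ℝ) 1 :=
    Set.uIcc_subset_Icc (by norm_num) (by norm_num)
  have hu : ∀ t ∈ Set.uIcc (0:ℝ) (1/2:ℝ),
      HasDerivAt (fun t : ℝ => f (z - (t:ℂ) * z)) (-(deriv f (z - (t:ℂ) * z) * z)) t := by
    intro t ht
    have hmemt := hmem' t (hsub ht)
    have inner : HasDerivAt (fun w : ℂ => z - w * z) (-z) ((t:ℂ)) := by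
      simpa using (((hasDerivAt_id ((t:ℂ))).mul_const z).const_sub z)
    have h1 : HasDerivAt (fun w : ℂ => f (z - w * z)) (deriv f (z - (t:ℂ) * z) * (-z)) ((t:ℂ)) :=
      (hfd _ hmemt).comp ((t:ℂ)) inner
    have := h1.comp_ofReal
    simpa [mul_comm, mul_neg, neg_mul] using this
  have hv : ∀ t ∈ Set.uIcc (0:ℝ) (1/2:ℝ),
      HasDerivAt (fun t : ℝ => g ((t:ℂ) * z)) (deriv g ((t:ℂ) * z) * z) t := by
    intro t ht
    have hmemt := hmem t (hsub ht)
    have inner : HasDerivAt (fun w : ℂ => w * z) z ((t:ℂ)) := by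
      simpa using ((hasDerivAt_id ((t:ℂ))).mul_const z)
    have h1 : HasDerivAt (fun w : ℂ => g (w * z)) (deriv g ((t:ℂ) * z) * z) ((t:ℂ)) :=
      (hgd _ hmemt).comp ((t:ℂ)) inner
    exact h1.comp_ofReal
  have hu' : IntervalIntegrable (fun t : ℝ => -(deriv f (z - (t:ℂ) * z) * z))
      volume 0 (1/2:ℝ) := by
    apply ContinuousOn.intervalIntegrable
    apply ContinuousOn.neg
    exact (((compCont' (deriv f) hdfc).mono hsub).mul continuousOn_const)
  have hv' : IntervalIntegrable (fun t : ℝ => deriv g ((t:ℂ) * z) * z)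
      volume 0 (1/2:ℝ) := by
    apply ContinuousOn.intervalIntegrable
    exact (((compCont (deriv g) hdgc).mono hsub).mul continuousOn_const)
  have ibp := intervalIntegral.integral_mul_deriv_eq_deriv_mul hu hv hu' hv'
  have eL : (∫ t in (0:ℝ)..(1/2:ℝ), f (z - (t:ℂ)*z) * (deriv g ((t:ℂ)*z) * z))
      = z * ∫ t in (0:ℝ)..(1/2:ℝ), f (z - (t:ℂ)*z) * deriv g ((t:ℂ)*z) := by
    rw [← intervalIntegral.integral_const_mul]
    apply intervalIntegral.integral_congr
    intro t _
    ring
  have eR : (∫ t in (0:ℝ)..(1/2:ℝ), -(deriv f (z - (t:ℂ)*z) * z) * g ((t:ℂ)*z))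
      = -(z * ∫ t in (0:ℝ)..(1/2:ℝ), deriv f (z - (t:ℂ)*z) * g ((t:ℂ)*z)) := by
    rw [← intervalIntegral.integral_const_mul, ← intervalIntegral.integral_neg]
    apply intervalIntegral.integral_congr
    intro t _
    ring
  rw [eL, eR] at ibp
  have F0 : f (z - ((0:ℝ):ℂ) * z) = f z := by norm_num
  have Fhalf : f (z - ((1/2:ℝ):ℂ) * z) = f (z / 2) := by congr 1; push_cast; ring
  have G0 : g (((0:ℝ):ℂ) * z) = g 0 := by norm_num
  have Ghalf : g (((1/2:ℝ):ℂ) * z) = g (z / 2) := by congr 1; push_cast; ring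
  rw [F0, Fhalf, G0, Ghalf] at ibp
  have comm : (∫ t in (0:ℝ)..(1/2:ℝ), g (z - (t:ℂ)*z) * deriv f ((t:ℂ)*z))
      = ∫ t in (0:ℝ)..(1/2:ℝ), ψ t := by
    apply intervalIntegral.integral_congr
    intro t _
    simp only [hψ]
    ring
  rw [show (duh f g z) = z * (∫ t in (0:ℝ)..1,
        deriv f (z - (t:ℂ) * z) * g ((t:ℂ) * z)) + f 0 * g z from rfl,
    segInt_half, segInt_half, refl1, split, refl2, comm]
  linear_combination -ibp
end
end

section
/- Let r > 0, 0 ≤ c < s < ∞ and μ a finite positive Borel measure on [0,1). Then μ is an s-Carleson measure (i.e. μ([t,1)) ≤ C(1-t)^s for all 0 ≤ t < 1) if and only if sup_{b∈D} ∫₀¹ (1-|b|)^r / ((1-t)^c (1-|b|t)^{s+r-c}) dμ(t) < ∞. -/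
open Complex MeasureTheory Set Metric Filter ENNReal

noncomputable section

private lemma exists_pow_two_bound (x : ℝ) (hx : 1 ≤ x) :
    ∃ n : ℕ, (2:ℝ)^n ≤ x ∧ x < 2^(n+1) := by
  have h1 : (1:ℕ) ≤ ⌊x⌋₊ := Nat.le_floor (by exact_mod_cast hx)
  refine ⟨Nat.log 2 ⌊x⌋₊, ?_, ?_⟩
  · calc ((2:ℝ)^(Nat.log 2 ⌊x⌋₊)) = ((2^(Nat.log 2 ⌊x⌋₊) : ℕ) : ℝ) := by push_cast; ring
      _ ≤ (⌊x⌋₊ : ℝ) := by exact_mod_cast Nat.pow_log_le_self 2 (by omega)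
      _ ≤ x := Nat.floor_le (by linarith)
  · have h2 : ⌊x⌋₊ < 2^(Nat.log 2 ⌊x⌋₊ + 1) := Nat.lt_pow_succ_log_self (by norm_num) _
    have h3 : (⌊x⌋₊:ℕ) + 1 ≤ 2^(Nat.log 2 ⌊x⌋₊ + 1) := h2
    calc x < ⌊x⌋₊ + 1 := Nat.lt_floor_add_one x
      _ ≤ ((2:ℝ)^(Nat.log 2 ⌊x⌋₊ + 1)) := by exact_mod_cast h3

private lemma tsum_ofReal_geometric_le (K q : ℝ) (hK : 0 ≤ K) (hq0 : 0 ≤ q) (hq1 : q < 1) :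
    ∑' n : ℕ, ENNReal.ofReal (K * q^n) ≤ ENNReal.ofReal (K * (1-q)⁻¹) := by
  have h : ∀ n : ℕ, ENNReal.ofReal (K * q^n) = ENNReal.ofReal K * (ENNReal.ofReal q)^n := by
    intro n
    rw [ENNReal.ofReal_mul hK, ENNReal.ofReal_pow hq0]
  rw [tsum_congr h, ENNReal.tsum_mul_left, ENNReal.tsum_geometric]
  have h1 : (1 : ℝ≥0∞) - ENNReal.ofReal q = ENNReal.ofReal (1 - q) := by
    rw [ENNReal.ofReal_sub _ hq0, ENNReal.ofReal_one]
  rw [h1, ← ENNReal.ofReal_inv_of_pos (by linarith), ← ENNReal.ofReal_mul hK]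

private lemma lemA (s β C : ℝ) (hs : 0 < s) (hβ : s < β) (hC : 0 < C)
    (μ : Measure ℝ)
    (hcar : ∀ t : ℝ, 0 ≤ t → t < 1 → μ (Set.Ico t 1) ≤ ENNReal.ofReal (C * (1 - t) ^ s))
    (δ : ℝ) (hδ : 0 < δ) (hδ1 : δ ≤ 1) :
    ∫⁻ t in Set.Icc (0:ℝ) (1-δ), ENNReal.ofReal ((1-t)^(-β)) ∂μ ≤
      ENNReal.ofReal ((C * 2^s * (1 - 2^(s-β))⁻¹) * δ^(s-β)) := by
  have h2 : (0:ℝ) < 2 := two_pos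
  have hq0 : (0:ℝ) ≤ 2^(s-β) := Real.rpow_nonneg h2.le _
  have hq1 : (2:ℝ)^(s-β) < 1 :=
    Real.rpow_lt_one_of_one_lt_of_neg (by norm_num) (by linarith)
  set I : ℕ → Set ℝ := fun n => Set.Ioc (1-δ*2^(n+1)) (1-δ*2^n) ∩ Set.Icc 0 (1-δ) with hI
  have hcover : Set.Icc (0:ℝ) (1-δ) ⊆ ⋃ n, I n := by
    intro t ht
    obtain ⟨n, hn1, hn2⟩ := exists_pow_two_bound ((1-t)/δ)
      (by rw [le_div_iff₀ hδ]; linarith [ht.2])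
    rw [le_div_iff₀ hδ] at hn1
    rw [div_lt_iff₀ hδ] at hn2
    exact Set.mem_iUnion.mpr ⟨n, ⟨⟨by nlinarith, by nlinarith⟩, ht⟩⟩
  have hterm : ∀ n : ℕ, ∫⁻ t in I n, ENNReal.ofReal ((1-t)^(-β)) ∂μ ≤
      ENNReal.ofReal ((C * 2^s * δ^(s-β)) * ((2:ℝ)^(s-β))^n) := by
    intro n
    have hp : (0:ℝ) < 2^n := by positivity
    have hp1 : (0:ℝ) < 2^(n+1) := by positivity
    have hmeas : MeasurableSet (I n) := measurableSet_Ioc.inter measurableSet_Icc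
    have hμ : μ (I n) ≤ ENNReal.ofReal (C * (δ*2^(n+1))^s) := by
      have hsub : I n ⊆ Set.Ico (max (1-δ*2^(n+1)) 0) 1 := by
        rintro t ⟨⟨ha, _⟩, hb, hc⟩
        exact ⟨max_le ha.le hb, by nlinarith⟩
      refine le_trans (measure_mono hsub) (le_trans (hcar _ (le_max_right _ _)
        (max_lt (by nlinarith) one_pos)) (ENNReal.ofReal_le_ofReal ?_))
      have h1t : 1 - max (1-δ*2^(n+1)) 0 ≤ δ*2^(n+1) := by
        have := le_max_left (1-δ*2^(n+1)) 0; linarith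
      have h1t0 : 0 ≤ 1 - max (1-δ*2^(n+1)) 0 := by
        have := max_le (by nlinarith : 1-δ*2^(n+1) ≤ (1:ℝ)) (by norm_num : (0:ℝ) ≤ 1)
        linarith
      exact mul_le_mul_of_nonneg_left (Real.rpow_le_rpow h1t0 h1t hs.le) hC.le
    calc ∫⁻ t in I n, ENNReal.ofReal ((1-t)^(-β)) ∂μ
        ≤ ∫⁻ _ in I n, ENNReal.ofReal ((δ*2^n)^(-β)) ∂μ := by
          refine setLIntegral_mono' hmeas (fun t ht => ENNReal.ofReal_le_ofReal ?_)
          exact Real.rpow_le_rpow_of_nonpos (by positivity) (by linarith [ht.1.2]) (by linarith)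
      _ = ENNReal.ofReal ((δ*2^n)^(-β)) * μ (I n) := setLIntegral_const _ _
      _ ≤ ENNReal.ofReal ((δ*2^n)^(-β)) * ENNReal.ofReal (C * (δ*2^(n+1))^s) := by gcongr
      _ = ENNReal.ofReal ((C * 2^s * δ^(s-β)) * ((2:ℝ)^(s-β))^n) := by
          rw [← ENNReal.ofReal_mul (by positivity)]
          congr 1
          have eδ : δ^(-β) * δ^s = δ^(s-β) := by
            rw [← Real.rpow_add hδ]; ring_nf
          have e2 : (2:ℝ)^((n:ℝ)*(-β)) * 2^(((n:ℝ)+1)*s) = 2^s * 2^((s-β)*(n:ℝ)) := by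
            rw [← Real.rpow_add h2, ← Real.rpow_add h2]; ring_nf
          calc (δ*2^n:ℝ)^(-β) * (C * (δ*2^(n+1))^s)
              = (δ^(-β) * (2:ℝ)^((n:ℝ)*(-β))) * (C * (δ^s * 2^(((n:ℝ)+1)*s))) := by
                rw [Real.mul_rpow hδ.le hp.le, Real.mul_rpow hδ.le hp1.le,
                  ← Real.rpow_natCast (2:ℝ) n, ← Real.rpow_natCast (2:ℝ) (n+1),
                  ← Real.rpow_mul h2.le, ← Real.rpow_mul h2.le]
                push_cast
                ring_nf
            _ = C * (δ^(-β) * δ^s) * ((2:ℝ)^((n:ℝ)*(-β)) * 2^(((n:ℝ)+1)*s)) := by ring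
            _ = C * δ^(s-β) * (2^s * 2^((s-β)*(n:ℝ))) := by rw [eδ, e2]
            _ = (C * 2^s * δ^(s-β)) * ((2:ℝ)^(s-β))^n := by
                rw [← Real.rpow_natCast ((2:ℝ)^(s-β)) n, ← Real.rpow_mul h2.le]
                ring
  calc ∫⁻ t in Set.Icc (0:ℝ) (1-δ), ENNReal.ofReal ((1-t)^(-β)) ∂μ
      ≤ ∫⁻ t in ⋃ n, I n, ENNReal.ofReal ((1-t)^(-β)) ∂μ := lintegral_mono_set hcover
    _ ≤ ∑' n, ∫⁻ t in I n, ENNReal.ofReal ((1-t)^(-β)) ∂μ := lintegral_iUnion_le _ _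
    _ ≤ ∑' n, ENNReal.ofReal ((C * 2^s * δ^(s-β)) * ((2:ℝ)^(s-β))^n) :=
        ENNReal.tsum_le_tsum hterm
    _ ≤ ENNReal.ofReal ((C * 2^s * δ^(s-β)) * (1 - 2^(s-β))⁻¹) :=
        tsum_ofReal_geometric_le _ _ (by positivity) hq0 hq1
    _ = ENNReal.ofReal ((C * 2^s * (1 - 2^(s-β))⁻¹) * δ^(s-β)) := by congr 1; ring

private lemma lemB (s c C : ℝ) (hs : 0 < s) (hc : 0 ≤ c) (hcs : c < s) (hC : 0 < C)
    (μ : Measure ℝ)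
    (hcar : ∀ t : ℝ, 0 ≤ t → t < 1 → μ (Set.Ico t 1) ≤ ENNReal.ofReal (C * (1 - t) ^ s))
    (δ : ℝ) (hδ : 0 < δ) (hδ1 : δ ≤ 1) :
    ∫⁻ t in Set.Ioo (1-δ) 1, ENNReal.ofReal ((1-t)^(-c)) ∂μ ≤
      ENNReal.ofReal ((C * 2^c * (1 - 2^(c-s))⁻¹) * δ^(s-c)) := by
  have h2 : (0:ℝ) < 2 := two_pos
  have hq0 : (0:ℝ) ≤ 2^(c-s) := Real.rpow_nonneg h2.le _
  have hq1 : (2:ℝ)^(c-s) < 1 :=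
    Real.rpow_lt_one_of_one_lt_of_neg (by norm_num) (by linarith)
  set J : ℕ → Set ℝ := fun n => Set.Ico (1-δ/2^n) (1-δ/2^(n+1)) with hJ
  have hcover : Set.Ioo (1-δ) 1 ⊆ ⋃ n, J n := by
    intro t ht
    have h1t : 0 < 1 - t := by linarith [ht.2]
    have hlt : 1 - t < δ := by linarith [ht.1]
    obtain ⟨n, hn1, hn2⟩ := exists_pow_two_bound (δ/(1-t))
      (by rw [le_div_iff₀ h1t]; linarith)
    rw [le_div_iff₀ h1t] at hn1
    rw [div_lt_iff₀ h1t] at hn2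
    have hp : (0:ℝ) < 2^n := by positivity
    have hp1 : (0:ℝ) < 2^(n+1) := by positivity
    refine Set.mem_iUnion.mpr ⟨n, ?_, ?_⟩
    · have : 1 - t ≤ δ/2^n := by rw [le_div_iff₀ hp]; nlinarith
      linarith
    · have : δ/2^(n+1) < 1 - t := by rw [div_lt_iff₀ hp1]; nlinarith
      linarith
  have hterm : ∀ n : ℕ, ∫⁻ t in J n, ENNReal.ofReal ((1-t)^(-c)) ∂μ ≤
      ENNReal.ofReal ((C * 2^c * δ^(s-c)) * ((2:ℝ)^(c-s))^n) := by
    intro n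
    have hp : (0:ℝ) < 2^n := by positivity
    have hp1 : (0:ℝ) < 2^(n+1) := by positivity
    have hdp : (0:ℝ) < δ/2^(n+1) := by positivity
    have hdp' : (0:ℝ) < δ/2^n := by positivity
    have h1p : (1:ℝ) ≤ 2^n := one_le_pow₀ (by norm_num)
    have hdle : δ/2^n ≤ δ := div_le_self hδ.le h1p
    have hμ : μ (J n) ≤ ENNReal.ofReal (C * (δ/2^n)^s) := by
      have hsub : J n ⊆ Set.Ico (1-δ/2^n) 1 := by
        rintro t ⟨ha, hb⟩
        exact ⟨ha, by linarith⟩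
      refine le_trans (measure_mono hsub) (le_trans (hcar _ (by linarith) (by linarith))
        (ENNReal.ofReal_le_ofReal (le_of_eq ?_)))
      norm_num
    calc ∫⁻ t in J n, ENNReal.ofReal ((1-t)^(-c)) ∂μ
        ≤ ∫⁻ _ in J n, ENNReal.ofReal ((δ/2^(n+1))^(-c)) ∂μ := by
          refine setLIntegral_mono' measurableSet_Ico (fun t ht => ENNReal.ofReal_le_ofReal ?_)
          exact Real.rpow_le_rpow_of_nonpos hdp (by linarith [ht.2]) (by linarith)
      _ = ENNReal.ofReal ((δ/2^(n+1))^(-c)) * μ (J n) := setLIntegral_const _ _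
      _ ≤ ENNReal.ofReal ((δ/2^(n+1))^(-c)) * ENNReal.ofReal (C * (δ/2^n)^s) := by gcongr
      _ = ENNReal.ofReal ((C * 2^c * δ^(s-c)) * ((2:ℝ)^(c-s))^n) := by
          rw [← ENNReal.ofReal_mul (by positivity)]
          congr 1
          have ed1 : δ/2^(n+1) = δ * (2:ℝ)^(-((n:ℝ)+1)) := by
            rw [Real.rpow_neg h2.le, div_eq_mul_inv]
            congr 2
            rw [show ((n:ℝ)+1) = ((n+1 : ℕ) : ℝ) by push_cast; ring, Real.rpow_natCast]
          have ed2 : δ/2^n = δ * (2:ℝ)^(-(n:ℝ)) := by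
            rw [Real.rpow_neg h2.le, div_eq_mul_inv, Real.rpow_natCast]
          have eδ : δ^(-c) * δ^s = δ^(s-c) := by
            rw [← Real.rpow_add hδ]; ring_nf
          have e2 : (2:ℝ)^((-((n:ℝ)+1))*(-c)) * 2^((-(n:ℝ))*s) = 2^c * 2^((c-s)*(n:ℝ)) := by
            rw [← Real.rpow_add h2, ← Real.rpow_add h2]; ring_nf
          calc (δ/2^(n+1):ℝ)^(-c) * (C * (δ/2^n)^s)
              = (δ^(-c) * (2:ℝ)^((-((n:ℝ)+1))*(-c))) * (C * (δ^s * 2^((-(n:ℝ))*s))) := by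
                rw [ed1, ed2, Real.mul_rpow hδ.le (Real.rpow_nonneg h2.le _),
                  Real.mul_rpow hδ.le (Real.rpow_nonneg h2.le _),
                  ← Real.rpow_mul h2.le, ← Real.rpow_mul h2.le]
            _ = C * (δ^(-c) * δ^s) * ((2:ℝ)^((-((n:ℝ)+1))*(-c)) * 2^((-(n:ℝ))*s)) := by ring
            _ = C * δ^(s-c) * (2^c * 2^((c-s)*(n:ℝ))) := by rw [eδ, e2]
            _ = (C * 2^c * δ^(s-c)) * ((2:ℝ)^(c-s))^n := by
                rw [← Real.rpow_natCast ((2:ℝ)^(c-s)) n, ← Real.rpow_mul h2.le]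
                ring
  calc ∫⁻ t in Set.Ioo (1-δ) 1, ENNReal.ofReal ((1-t)^(-c)) ∂μ
      ≤ ∫⁻ t in ⋃ n, J n, ENNReal.ofReal ((1-t)^(-c)) ∂μ := lintegral_mono_set hcover
    _ ≤ ∑' n, ∫⁻ t in J n, ENNReal.ofReal ((1-t)^(-c)) ∂μ := lintegral_iUnion_le _ _
    _ ≤ ∑' n, ENNReal.ofReal ((C * 2^c * δ^(s-c)) * ((2:ℝ)^(c-s))^n) :=
        ENNReal.tsum_le_tsum hterm
    _ ≤ ENNReal.ofReal ((C * 2^c * δ^(s-c)) * (1 - 2^(c-s))⁻¹) :=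
        tsum_ofReal_geometric_le _ _ (by positivity) hq0 hq1
    _ = ENNReal.ofReal ((C * 2^c * (1 - 2^(c-s))⁻¹) * δ^(s-c)) := by congr 1; ring

theorem stmt13 (r c s : ℝ) (hr : 0 < r) (hc : 0 ≤ c) (hcs : c < s)
    (μ : Measure ℝ) [IsFiniteMeasure μ] (hsupp : μ (Set.Ico (0:ℝ) 1)ᶜ = 0) :
    (∃ C : ℝ, 0 < C ∧ ∀ t : ℝ, 0 ≤ t → t < 1 →
        μ (Set.Ico t 1) ≤ ENNReal.ofReal (C * (1 - t) ^ s)) ↔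
    (∃ M : ℝ, ∀ b : ℂ, ‖b‖ < 1 →
      (∫⁻ t in Set.Ico (0:ℝ) 1, ENNReal.ofReal (
        (1 - ‖b‖) ^ r / ((1 - t) ^ c * (1 - ‖b‖ * t) ^ (s + r - c))) ∂μ) ≤ ENNReal.ofReal M) := by
  have hs : 0 < s := lt_of_le_of_lt hc hcs
  have h2 : (0:ℝ) < 2 := two_pos
  constructor
  · rintro ⟨C, hC, hcar⟩
    set KA : ℝ := C * 2^s * (1 - 2^(-r))⁻¹ with hKA
    set KB : ℝ := C * 2^c * (1 - 2^(c-s))⁻¹ with hKB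
    have hqA : (2:ℝ)^(-r) < 1 := Real.rpow_lt_one_of_one_lt_of_neg (by norm_num) (by linarith)
    have hqB : (2:ℝ)^(c-s) < 1 := Real.rpow_lt_one_of_one_lt_of_neg (by norm_num) (by linarith)
    have hKA0 : 0 ≤ KA := by
      have : (0:ℝ) ≤ (1 - 2^(-r))⁻¹ := inv_nonneg.mpr (by linarith)
      positivity
    have hKB0 : 0 ≤ KB := by
      have : (0:ℝ) ≤ (1 - 2^(c-s))⁻¹ := inv_nonneg.mpr (by linarith)
      positivity
    refine ⟨KA + KB, fun b hb => ?_⟩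
    set a : ℝ := ‖b‖ with hadef
    have ha0 : 0 ≤ a := norm_nonneg b
    set δ : ℝ := 1 - a with hδdef
    have hδ : 0 < δ := by simp only [hδdef]; linarith
    have hδ1 : δ ≤ 1 := by simp only [hδdef]; linarith
    have hsplit : Set.Ico (0:ℝ) 1 ⊆ Set.Icc 0 (1-δ) ∪ Set.Ioo (1-δ) 1 := by
      rintro t ⟨h0, h1⟩
      by_cases h : t ≤ 1-δ
      · exact Or.inl ⟨h0, h⟩
      · exact Or.inr ⟨lt_of_not_ge h, h1⟩
    have hpartA : ∫⁻ t in Set.Icc (0:ℝ) (1-δ),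
        ENNReal.ofReal (δ^r / ((1-t)^c * (1-a*t)^(s+r-c))) ∂μ ≤ ENNReal.ofReal KA := by
      have hpt : ∀ t ∈ Set.Icc (0:ℝ) (1-δ),
          ENNReal.ofReal (δ^r / ((1-t)^c * (1-a*t)^(s+r-c))) ≤
          ENNReal.ofReal (δ^r) * ENNReal.ofReal ((1-t)^(-(s+r))) := by
        rintro t ⟨h0, h1⟩
        have h1t : 0 < 1 - t := by linarith
        have hat : 1 - t ≤ 1 - a*t := by nlinarith
        have hd : (1-t)^(s+r) ≤ (1-t)^c * (1-a*t)^(s+r-c) := by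
          have e : (1-t)^(s+r) = (1-t)^c * (1-t)^(s+r-c) := by
            rw [← Real.rpow_add h1t]; ring_nf
          rw [e]
          exact mul_le_mul_of_nonneg_left
            (Real.rpow_le_rpow h1t.le hat (by linarith)) (by positivity)
        rw [← ENNReal.ofReal_mul (by positivity)]
        refine ENNReal.ofReal_le_ofReal ?_
        calc δ^r / ((1-t)^c * (1-a*t)^(s+r-c)) ≤ δ^r / (1-t)^(s+r) :=
              div_le_div_of_nonneg_left (by positivity) (by positivity) hd
          _ = δ^r * (1-t)^(-(s+r)) := by
              rw [Real.rpow_neg h1t.le, div_eq_mul_inv]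
      calc ∫⁻ t in Set.Icc (0:ℝ) (1-δ),
            ENNReal.ofReal (δ^r / ((1-t)^c * (1-a*t)^(s+r-c))) ∂μ
          ≤ ∫⁻ t in Set.Icc (0:ℝ) (1-δ),
            ENNReal.ofReal (δ^r) * ENNReal.ofReal ((1-t)^(-(s+r))) ∂μ :=
            setLIntegral_mono' measurableSet_Icc hpt
        _ = ENNReal.ofReal (δ^r) * ∫⁻ t in Set.Icc (0:ℝ) (1-δ),
            ENNReal.ofReal ((1-t)^(-(s+r))) ∂μ :=
            lintegral_const_mul' _ _ ENNReal.ofReal_ne_top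
        _ ≤ ENNReal.ofReal (δ^r) *
            ENNReal.ofReal ((C * 2^s * (1 - 2^(s-(s+r)))⁻¹) * δ^(s-(s+r))) := by
            gcongr
            exact lemA s (s+r) C hs (by linarith) hC μ hcar δ hδ hδ1
        _ = ENNReal.ofReal KA := by
            rw [← ENNReal.ofReal_mul (by positivity)]
            congr 1
            have e : s - (s+r) = -r := by ring
            rw [e, hKA]
            have : δ^r * (C * 2^s * (1 - 2^(-r))⁻¹ * δ^(-r)) =
                (C * 2^s * (1 - 2^(-r))⁻¹) * (δ^r * δ^(-r)) := by ring
            rw [this, ← Real.rpow_add hδ]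
            norm_num
    have hpartB : ∫⁻ t in Set.Ioo (1-δ) 1,
        ENNReal.ofReal (δ^r / ((1-t)^c * (1-a*t)^(s+r-c))) ∂μ ≤ ENNReal.ofReal KB := by
      have hpt : ∀ t ∈ Set.Ioo (1-δ) 1,
          ENNReal.ofReal (δ^r / ((1-t)^c * (1-a*t)^(s+r-c))) ≤
          ENNReal.ofReal (δ^(c-s)) * ENNReal.ofReal ((1-t)^(-c)) := by
        rintro t ⟨h0, h1⟩
        have h1t : 0 < 1 - t := by linarith
        have hat : δ ≤ 1 - a*t := by nlinarith
        have hd : (1-t)^c * δ^(s+r-c) ≤ (1-t)^c * (1-a*t)^(s+r-c) :=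
          mul_le_mul_of_nonneg_left
            (Real.rpow_le_rpow hδ.le hat (by linarith)) (by positivity)
        rw [← ENNReal.ofReal_mul (Real.rpow_nonneg hδ.le _)]
        refine ENNReal.ofReal_le_ofReal ?_
        calc δ^r / ((1-t)^c * (1-a*t)^(s+r-c)) ≤ δ^r / ((1-t)^c * δ^(s+r-c)) :=
              div_le_div_of_nonneg_left (by positivity) (by positivity) hd
          _ = δ^(c-s) * (1-t)^(-c) := by
              rw [div_mul_eq_div_div_swap, ← Real.rpow_sub hδ,
                show r - (s+r-c) = c - s by ring, div_eq_mul_inv, Real.rpow_neg h1t.le]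
      calc ∫⁻ t in Set.Ioo (1-δ) 1,
            ENNReal.ofReal (δ^r / ((1-t)^c * (1-a*t)^(s+r-c))) ∂μ
          ≤ ∫⁻ t in Set.Ioo (1-δ) 1,
            ENNReal.ofReal (δ^(c-s)) * ENNReal.ofReal ((1-t)^(-c)) ∂μ :=
            setLIntegral_mono' measurableSet_Ioo hpt
        _ = ENNReal.ofReal (δ^(c-s)) * ∫⁻ t in Set.Ioo (1-δ) 1,
            ENNReal.ofReal ((1-t)^(-c)) ∂μ :=
            lintegral_const_mul' _ _ ENNReal.ofReal_ne_top
        _ ≤ ENNReal.ofReal (δ^(c-s)) *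
            ENNReal.ofReal ((C * 2^c * (1 - 2^(c-s))⁻¹) * δ^(s-c)) := by
            gcongr
            exact lemB s c C hs hc hcs hC μ hcar δ hδ hδ1
        _ = ENNReal.ofReal KB := by
            rw [← ENNReal.ofReal_mul (Real.rpow_nonneg hδ.le _)]
            congr 1
            rw [hKB]
            have : δ^(c-s) * (C * 2^c * (1 - 2^(c-s))⁻¹ * δ^(s-c)) =
                (C * 2^c * (1 - 2^(c-s))⁻¹) * (δ^(c-s) * δ^(s-c)) := by ring
            rw [this, ← Real.rpow_add hδ]
            norm_num
    calc ∫⁻ t in Set.Ico (0:ℝ) 1,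
          ENNReal.ofReal (δ^r / ((1-t)^c * (1-a*t)^(s+r-c))) ∂μ
        ≤ ∫⁻ t in Set.Icc (0:ℝ) (1-δ) ∪ Set.Ioo (1-δ) 1,
          ENNReal.ofReal (δ^r / ((1-t)^c * (1-a*t)^(s+r-c))) ∂μ :=
          lintegral_mono_set hsplit
      _ ≤ (∫⁻ t in Set.Icc (0:ℝ) (1-δ),
          ENNReal.ofReal (δ^r / ((1-t)^c * (1-a*t)^(s+r-c))) ∂μ) +
          ∫⁻ t in Set.Ioo (1-δ) 1,
          ENNReal.ofReal (δ^r / ((1-t)^c * (1-a*t)^(s+r-c))) ∂μ :=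
          lintegral_union_le _ _ _
      _ ≤ ENNReal.ofReal KA + ENNReal.ofReal KB := add_le_add hpartA hpartB
      _ = ENNReal.ofReal (KA + KB) := (ENNReal.ofReal_add hKA0 hKB0).symm
  · rintro ⟨M, hM⟩
    refine ⟨(max M 0 + 1) * 2^(s+r-c), by positivity, fun t₀ ht₀0 ht₀1 => ?_⟩
    have key := hM (t₀ : ℂ) (by rwa [Complex.norm_of_nonneg ht₀0])
    rw [Complex.norm_of_nonneg ht₀0] at key
    set δ : ℝ := 1 - t₀ with hδdef
    have hδ : 0 < δ := by simp only [hδdef]; linarith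
    set κ : ℝ := 2^(-(s+r-c)) * δ^(-s) with hκ
    have hκpos : 0 < κ := by positivity
    have hlow : ENNReal.ofReal κ * μ (Set.Ico t₀ 1) ≤ ENNReal.ofReal M := by
      calc ENNReal.ofReal κ * μ (Set.Ico t₀ 1)
          = ∫⁻ _ in Set.Ico t₀ 1, ENNReal.ofReal κ ∂μ := (setLIntegral_const _ _).symm
        _ ≤ ∫⁻ t in Set.Ico t₀ 1,
            ENNReal.ofReal (δ^r / ((1-t)^c * (1-t₀*t)^(s+r-c))) ∂μ := by
            refine setLIntegral_mono' measurableSet_Ico (fun t ht => ?_)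
            obtain ⟨h0, h1⟩ := ht
            have h1t : 0 < 1 - t := by linarith
            have h1tδ : 1 - t ≤ δ := by simp only [hδdef]; linarith
            have htt : 0 < 1 - t₀*t := by nlinarith
            have htt2 : 1 - t₀*t ≤ 2*δ := by nlinarith
            refine ENNReal.ofReal_le_ofReal ?_
            have hden : (1-t)^c * (1-t₀*t)^(s+r-c) ≤ δ^c * (2*δ)^(s+r-c) :=
              mul_le_mul (Real.rpow_le_rpow h1t.le h1tδ hc)
                (Real.rpow_le_rpow htt.le htt2 (by linarith))
                (by positivity) (by positivity)
            have e1 : (2*δ)^(s+r-c) = 2^(s+r-c) * δ^(s+r-c) :=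
              Real.mul_rpow (by norm_num) hδ.le
            have hstep0 : κ * (δ^c * (2*δ)^(s+r-c)) = δ^r := by
              calc κ * (δ^c * (2*δ)^(s+r-c))
                  = ((2:ℝ)^(-(s+r-c)) * 2^(s+r-c)) * (δ^(-s) * δ^c * δ^(s+r-c)) := by
                    rw [hκ, e1]; ring
                _ = (2:ℝ)^((-(s+r-c)) + (s+r-c)) * δ^(((-s) + c) + (s+r-c)) := by
                    rw [← Real.rpow_add (by norm_num : (0:ℝ) < 2), ← Real.rpow_add hδ,
                      ← Real.rpow_add hδ]
                _ = δ^r := by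
                    rw [show (-(s+r-c)) + (s+r-c) = 0 by ring,
                      show ((-s) + c) + (s+r-c) = r by ring, Real.rpow_zero, one_mul]
            have hstep : κ = δ^r / (δ^c * (2*δ)^(s+r-c)) := by
              rw [eq_div_iff (by positivity : (δ^c * (2*δ)^(s+r-c)) ≠ 0)]
              exact hstep0
            rw [hstep]
            exact div_le_div_of_nonneg_left (by positivity) (by positivity) hden
        _ ≤ ∫⁻ t in Set.Ico (0:ℝ) 1,
            ENNReal.ofReal (δ^r / ((1-t)^c * (1-t₀*t)^(s+r-c))) ∂μ :=
            lintegral_mono_set (fun t ht => ⟨le_trans ht₀0 ht.1, ht.2⟩)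
        _ ≤ ENNReal.ofReal M := key
    have hκ0 : ENNReal.ofReal κ ≠ 0 := by
      simp only [ne_eq, ENNReal.ofReal_eq_zero, not_le]; exact hκpos
    have hlow' : μ (Set.Ico t₀ 1) * ENNReal.ofReal κ ≤ ENNReal.ofReal M := by
      rwa [mul_comm] at hlow
    have hdiv := (ENNReal.le_div_iff_mul_le (Or.inl hκ0) (Or.inl ENNReal.ofReal_ne_top)).mpr hlow'
    refine le_trans hdiv ?_
    rw [ENNReal.div_eq_inv_mul, ← ENNReal.ofReal_inv_of_pos hκpos,
      ← ENNReal.ofReal_mul (by positivity)]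
    refine ENNReal.ofReal_le_ofReal ?_
    have hκinv : κ⁻¹ = 2^(s+r-c) * δ^s := by
      rw [hκ, Real.rpow_neg (by norm_num : (0:ℝ) ≤ 2), Real.rpow_neg hδ.le,
        mul_inv, inv_inv, inv_inv]
    rw [hκinv]
    have hM0 : M ≤ max M 0 + 1 := by
      have := le_max_left M 0; linarith
    have h2δ : (0:ℝ) ≤ 2^(s+r-c) * δ^s := by positivity
    nlinarith [Real.rpow_nonneg hδ.le s, Real.rpow_nonneg (le_of_lt h2) (s+r-c),
      mul_le_mul_of_nonneg_right hM0 h2δ]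

end
end

section
/- For w, a in the open unit disk and t > 1, r > 1, the integral I = ∫₀^{2π} dθ / (|1 - w̄e^{iθ}|^t |1 - āe^{iθ}|^r) satisfies I ≍ 1/((1-|w|²)^{t-1} |1 - wā|^r) + 1/((1-|a|²)^{r-1} |1 - wā|^t), with implicit constants independent of w, a. -/
open Complex MeasureTheory Set Metric Filter ENNReal

noncomputable section

def Complex.abs : AbsoluteValue ℂ ℝ := IsAbsoluteValue.toAbsoluteValue (norm : ℂ → ℝ)

lemma Complex.norm_eq_abs (z : ℂ) : ‖z‖ = Complex.abs z := rfl

lemma Complex.abs_conj (z : ℂ) : Complex.abs ((starRingEnd ℂ) z) = Complex.abs z :=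
  Complex.norm_conj z

lemma Complex.abs_exp_ofReal_mul_I (x : ℝ) : Complex.abs (Complex.exp (x * Complex.I)) = 1 :=
  Complex.norm_exp_ofReal_mul_I x

lemma Complex.sq_abs (z : ℂ) : Complex.abs z ^ 2 = Complex.normSq z := Complex.sq_norm z

lemma Complex.abs_ofReal (r : ℝ) : Complex.abs (r : ℂ) = |r| := Complex.norm_real r

lemma Complex.abs_I : Complex.abs Complex.I = 1 := Complex.norm_I

lemma Complex.abs_mul_exp_arg_mul_I (x : ℂ) :
    ↑(Complex.abs x) * Complex.exp (Complex.arg x * Complex.I) = x :=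
  Complex.norm_mul_exp_arg_mul_I x

lemma Complex.continuous_abs : Continuous Complex.abs := continuous_norm

lemma Complex.abs_exp_sub_one_le {x : ℂ} (hx : Complex.abs x ≤ 1) :
    Complex.abs (Complex.exp x - 1) ≤ 2 * Complex.abs x :=
  Complex.norm_exp_sub_one_le hx

lemma abs_key (b : ℂ) (θ : ℝ) :
    Complex.abs (1 - (starRingEnd ℂ) b * Complex.exp (θ * Complex.I))
      = Complex.abs (Complex.exp (θ * Complex.I) - b) := by
  set e := Complex.exp (θ * Complex.I) with he
  have habs : Complex.abs e = 1 := Complex.abs_exp_ofReal_mul_I θ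
  have h1 : e * (starRingEnd ℂ) e = 1 := by
    rw [Complex.mul_conj']
    simp [Complex.norm_eq_abs, habs]
  calc Complex.abs (1 - (starRingEnd ℂ) b * e)
      = Complex.abs ((starRingEnd ℂ) e) * Complex.abs (1 - (starRingEnd ℂ) b * e) := by
        rw [Complex.abs_conj, habs, one_mul]
    _ = Complex.abs ((starRingEnd ℂ) e * (1 - (starRingEnd ℂ) b * e)) := (map_mul _ _ _).symm
    _ = Complex.abs ((starRingEnd ℂ) e - (starRingEnd ℂ) b) := by
        congr 1
        linear_combination (-(starRingEnd ℂ) b) * h1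
    _ = Complex.abs ((starRingEnd ℂ) (e - b)) := by rw [map_sub (starRingEnd ℂ) e b]
    _ = Complex.abs (e - b) := Complex.abs_conj _

lemma abs_exp_sub_one_eq (u : ℝ) :
    Complex.abs (Complex.exp (u * Complex.I) - 1) = 2 * |Real.sin (u / 2)| := by
  have hcos : Real.cos u = 1 - 2 * Real.sin (u / 2) ^ 2 := by
    have h := Real.cos_two_mul (u / 2)
    rw [show 2 * (u / 2) = u by ring] at h
    nlinarith [Real.sin_sq_add_cos_sq (u / 2)]
  have hsq : Complex.abs (Complex.exp (u * Complex.I) - 1) ^ 2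
      = (2 * |Real.sin (u / 2)|) ^ 2 := by
    rw [Complex.sq_abs, Complex.normSq_apply]
    simp only [Complex.sub_re, Complex.sub_im, Complex.one_re, Complex.one_im,
      Complex.exp_ofReal_mul_I_re, Complex.exp_ofReal_mul_I_im, mul_pow, _root_.sq_abs]
    nlinarith [Real.sin_sq_add_cos_sq u]
  have h1 : (0:ℝ) ≤ Complex.abs (Complex.exp (u * Complex.I) - 1) := Complex.abs.nonneg _
  have h2 : (0:ℝ) ≤ 2 * |Real.sin (u / 2)| := by positivity
  nlinarith [hsq]

lemma abs_exp_sub_one_ge (u : ℝ) (hu : |u| ≤ Real.pi) :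
    (2 / Real.pi) * |u| ≤ Complex.abs (Complex.exp (u * Complex.I) - 1) := by
  have hpi := Real.pi_pos
  rw [abs_exp_sub_one_eq]
  have h : |Real.sin (u / 2)| = Real.sin (|u| / 2) := by
    rcases le_or_gt 0 u with h0 | h0
    · rw [_root_.abs_of_nonneg h0, _root_.abs_of_nonneg]
      exact Real.sin_nonneg_of_nonneg_of_le_pi (by linarith) (by rw [_root_.abs_of_nonneg h0] at hu; linarith)
    · rw [_root_.abs_of_neg h0]
      rw [_root_.abs_of_neg h0] at hu
      rw [show u / 2 = -(-u/2) by ring, Real.sin_neg, abs_neg, _root_.abs_of_nonneg]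
      exact Real.sin_nonneg_of_nonneg_of_le_pi (by linarith) (by linarith)
  rw [h]
  have := Real.mul_le_sin (x := |u| / 2) (by positivity) (by linarith)
  calc (2 / Real.pi) * |u| = 2 * (2 / Real.pi * (|u| / 2)) := by ring
    _ ≤ 2 * Real.sin (|u| / 2) := by linarith

lemma abs_lb (b : ℂ) (θ : ℝ) :
    1 - Complex.abs b ≤ Complex.abs (1 - (starRingEnd ℂ) b * Complex.exp (θ * Complex.I)) := by
  have h : Complex.abs ((starRingEnd ℂ) b * Complex.exp (θ * Complex.I)) = Complex.abs b := by
    rw [map_mul, Complex.abs_conj, Complex.abs_exp_ofReal_mul_I, mul_one]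
  calc 1 - Complex.abs b
      = ‖(1:ℂ)‖ - ‖(starRingEnd ℂ) b * Complex.exp (θ * Complex.I)‖ := by
        rw [norm_one, Complex.norm_eq_abs, h]
    _ ≤ ‖1 - (starRingEnd ℂ) b * Complex.exp (θ * Complex.I)‖ := norm_sub_norm_le _ _
    _ = _ := Complex.norm_eq_abs _

lemma abs_pos' {b : ℂ} (hb : Complex.abs b < 1) (θ : ℝ) :
    0 < Complex.abs (1 - (starRingEnd ℂ) b * Complex.exp (θ * Complex.I)) :=
  lt_of_lt_of_le (by linarith) (abs_lb b θ)

lemma cont_abs (b : ℂ) :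
    Continuous fun θ : ℝ => Complex.abs (1 - (starRingEnd ℂ) b * Complex.exp (θ * Complex.I)) := by
  apply Complex.continuous_abs.comp
  fun_prop

lemma exp_per (θ : ℝ) :
    Complex.exp (↑(θ + 2 * Real.pi) * Complex.I) = Complex.exp (θ * Complex.I) := by
  push_cast
  rw [add_mul, Complex.exp_add, Complex.exp_two_pi_mul_I, mul_one]

lemma onevar {s : ℝ} (hs : 1 < s) {b : ℂ} (hb : Complex.abs b < 1) :
    (∫ θ in (0:ℝ)..(2 * Real.pi),
        1 / Complex.abs (1 - (starRingEnd ℂ) b * Complex.exp (θ * Complex.I)) ^ s)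
      ≤ (2 ^ (s + 1) * Real.pi / (s - 1)) / (1 - Complex.abs b) ^ (s - 1) := by
  have hpi := Real.pi_pos
  set ρ := Complex.abs b with hρ
  set δ := 1 - ρ with hδ
  have hδ0 : 0 < δ := by simp [hδ]; linarith
  have hρ0 : 0 ≤ ρ := Complex.abs.nonneg b
  have hδ1 : δ ≤ 1 := by simp [hδ]; linarith
  set φ := Complex.arg b with hφ
  set g : ℝ → ℝ := fun θ =>
    1 / Complex.abs (1 - (starRingEnd ℂ) b * Complex.exp (θ * Complex.I)) ^ s with hg
  have hgc : Continuous g := by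
    apply continuous_const.div
    · exact (cont_abs b).rpow_const (fun θ => Or.inl (abs_pos' hb θ).ne')
    · exact fun θ => (Real.rpow_pos_of_pos (abs_pos' hb θ) s).ne'
  have hgper : Function.Periodic g (2 * Real.pi) := by
    intro θ
    simp only [hg, exp_per]
  -- shift to interval centered at φ
  have step1 : (∫ θ in (0:ℝ)..(2 * Real.pi), g θ)
      = ∫ θ in (φ - Real.pi)..(φ + Real.pi), g θ := by
    have h := hgper.intervalIntegral_add_eq 0 (φ - Real.pi)
    rw [zero_add] at h
    rw [h]
    congr 1
    ring
  -- change of variables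
  have step2 : (∫ θ in (φ - Real.pi)..(φ + Real.pi), g θ)
      = ∫ u in (-Real.pi)..Real.pi, g (u + φ) := by
    rw [intervalIntegral.integral_comp_add_right]
    congr 1 <;> ring
  set h : ℝ → ℝ := fun u => δ + |u| / Real.pi with hh
  have hhpos : ∀ u : ℝ, 0 < h u := by
    intro u
    have : 0 ≤ |u| / Real.pi := by positivity
    simp only [hh]; linarith
  have hhc : Continuous h :=
    continuous_const.add (continuous_abs.div_const _)
  have hbc : Continuous fun u : ℝ => (2:ℝ) ^ s * (1 / h u ^ s) := by
    apply continuous_const.mul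
    apply continuous_const.div
    · exact hhc.rpow_const (fun u => Or.inl (hhpos u).ne')
    · exact fun u => (Real.rpow_pos_of_pos (hhpos u) s).ne'
  -- pointwise bound
  have hpoint : ∀ u ∈ Set.Icc (-Real.pi) Real.pi,
      g (u + φ) ≤ (2:ℝ) ^ s * (1 / h u ^ s) := by
    intro u hu
    have huabs : |u| ≤ Real.pi := abs_le.2 ⟨hu.1, hu.2⟩
    set E := Complex.exp (↑(u + φ) * Complex.I) with hE
    set F := Complex.exp (↑φ * Complex.I) with hF
    have hEF : E = Complex.exp (↑u * Complex.I) * F := by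
      rw [hE, hF, ← Complex.exp_add]
      congr 1
      push_cast
      ring
    have hFabs : Complex.abs F = 1 := Complex.abs_exp_ofReal_mul_I φ
    have hbF : b = (ρ:ℂ) * F := by
      rw [hF]
      exact (Complex.abs_mul_exp_arg_mul_I b).symm
    have hkey : Complex.abs (1 - (starRingEnd ℂ) b * E) = Complex.abs (E - b) := abs_key b (u + φ)
    -- lower bound 1 : δ
    have hl1 : δ ≤ Complex.abs (E - b) := by
      rw [← hkey]
      exact abs_lb b (u + φ)
    -- lower bound 2 : via chord
    have hEFsub : Complex.abs (E - F) = Complex.abs (Complex.exp (↑u * Complex.I) - 1) := by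
      rw [hEF, show Complex.exp (↑u * Complex.I) * F - F = (Complex.exp (↑u * Complex.I) - 1) * F by ring,
        map_mul, hFabs, mul_one]
    have hFb : Complex.abs (F - b) = δ := by
      rw [hbF, show F - (ρ:ℂ) * F = ((1:ℂ) - ρ) * F by ring, map_mul, hFabs, mul_one]
      rw [show ((1:ℂ) - (ρ:ℝ)) = ((δ : ℝ) : ℂ) by push_cast [hδ]; ring]
      rw [Complex.abs_ofReal, _root_.abs_of_nonneg hδ0.le]
    have hl2 : (2 / Real.pi) * |u| - δ ≤ Complex.abs (E - b) := by
      have htri : Complex.abs (E - F) ≤ Complex.abs (E - b) + Complex.abs (F - b) := by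
        have := Complex.abs.sub_le E b F
        calc Complex.abs (E - F) ≤ Complex.abs (E - b) + Complex.abs (b - F) := this
          _ = Complex.abs (E - b) + Complex.abs (F - b) := by rw [Complex.abs.map_sub b F]
      have hge := abs_exp_sub_one_ge u huabs
      rw [hEFsub] at htri
      linarith
    -- combine : abs (E - b) ≥ h u / 2
    have hq : (2 / Real.pi) * |u| = 2 * (|u| / Real.pi) := by ring
    have hl3 : h u / 2 ≤ Complex.abs (E - b) := by
      rcases le_total (|u| / Real.pi) δ with hc | hc
      · have : h u / 2 ≤ δ := by simp only [hh]; linarith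
        linarith
      · have : h u / 2 ≤ (2 / Real.pi) * |u| - δ := by
          simp only [hh]; rw [hq]; linarith
        linarith
    -- conclude
    have hrp : (h u / 2) ^ s ≤ Complex.abs (E - b) ^ s :=
      Real.rpow_le_rpow (by positivity) hl3 (by linarith)
    have h2pos : (0:ℝ) < (h u / 2) ^ s := Real.rpow_pos_of_pos (half_pos (hhpos u)) s
    have hdiv : (h u / 2) ^ s = h u ^ s / (2:ℝ) ^ s :=
      Real.div_rpow (hhpos u).le (by norm_num) s
    have hgval : g (u + φ) = 1 / Complex.abs (E - b) ^ s := by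
      simp only [hg]
      exact congrArg (fun x => 1 / x ^ s) hkey
    rw [hgval]
    calc 1 / Complex.abs (E - b) ^ s ≤ 1 / (h u / 2) ^ s :=
          one_div_le_one_div_of_le h2pos hrp
      _ = (2:ℝ) ^ s * (1 / h u ^ s) := by
          rw [hdiv, one_div_div, mul_one_div]
  -- monotone
  have step3 : (∫ u in (-Real.pi)..Real.pi, g (u + φ))
      ≤ ∫ u in (-Real.pi)..Real.pi, (2:ℝ) ^ s * (1 / h u ^ s) := by
    apply intervalIntegral.integral_mono_on (by linarith)
    · exact (hgc.comp (continuous_id.add continuous_const)).intervalIntegrable _ _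
    · exact hbc.intervalIntegrable _ _
    · exact hpoint
  -- symmetry and FTC
  set f : ℝ → ℝ := fun u => 1 / h u ^ s with hf
  have hfc : Continuous f :=
    continuous_const.div (hhc.rpow_const fun u => Or.inl (hhpos u).ne')
      (fun u => (Real.rpow_pos_of_pos (hhpos u) s).ne')
  have hsym : (∫ u in (-Real.pi)..(0:ℝ), f u) = ∫ u in (0:ℝ)..Real.pi, f u := by
    have h1 : (∫ u in (0:ℝ)..Real.pi, f (-u)) = ∫ u in (-Real.pi)..(0:ℝ), f u := by
      simpa using intervalIntegral.integral_comp_neg (a := (0:ℝ)) (b := Real.pi) f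
    have h2 : ∀ u : ℝ, f (-u) = f u := by
      intro u; simp only [hf, hh, abs_neg]
    rw [← h1]
    simp only [h2]
  have hsplit : (∫ u in (-Real.pi)..Real.pi, f u)
      = (∫ u in (-Real.pi)..(0:ℝ), f u) + ∫ u in (0:ℝ)..Real.pi, f u :=
    (intervalIntegral.integral_add_adjacent_intervals (hfc.intervalIntegrable _ _)
      (hfc.intervalIntegrable _ _)).symm
  have hFTC : (∫ u in (0:ℝ)..Real.pi, f u) ≤ Real.pi / (s - 1) * δ ^ (1 - s) := by
    set F : ℝ → ℝ := fun u => Real.pi / (1 - s) * (δ + u / Real.pi) ^ (1 - s) with hF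
    have hs1 : (1:ℝ) - s ≠ 0 := by linarith
    have hderiv : ∀ u ∈ Set.uIcc (0:ℝ) Real.pi, HasDerivAt F (f u) u := by
      intro u hu
      rw [Set.uIcc_of_le hpi.le] at hu
      have hu0 : 0 ≤ u := hu.1
      have hx : (0:ℝ) < δ + u / Real.pi := by
        have : (0:ℝ) ≤ u / Real.pi := by positivity
        linarith
      have h1 : HasDerivAt (fun u : ℝ => δ + u / Real.pi) (1 / Real.pi) u := by
        simpa using ((hasDerivAt_id u).div_const Real.pi).const_add δ
      have h2 : HasDerivAt (fun x : ℝ => x ^ (1 - s))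
          ((1 - s) * (δ + u / Real.pi) ^ (1 - s - 1)) (δ + u / Real.pi) :=
        Real.hasDerivAt_rpow_const (Or.inl hx.ne')
      have h3 := (h2.comp u h1).const_mul (Real.pi / (1 - s))
      have heq : f u = Real.pi / (1 - s) * ((1 - s) * (δ + u / Real.pi) ^ (1 - s - 1) * (1 / Real.pi)) := by
        have habsu : |u| = u := _root_.abs_of_nonneg hu0
        have hfu : f u = (δ + u / Real.pi) ^ (-s) := by
          simp only [hf, hh, habsu]
          rw [Real.rpow_neg hx.le, one_div]
        rw [hfu, show (1 - s - 1) = -s by ring]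
        field_simp
      rw [heq]
      exact h3
    have heval := intervalIntegral.integral_eq_sub_of_hasDerivAt hderiv (hfc.intervalIntegrable _ _)
    rw [heval]
    have hππ : Real.pi / Real.pi = 1 := div_self (ne_of_gt hpi)
    have hF0 : F 0 = Real.pi / (1 - s) * δ ^ (1 - s) := by simp [hF]
    have hFπ : F Real.pi = Real.pi / (1 - s) * (δ + 1) ^ (1 - s) := by
      simp only [hF, hππ]
    have hgen : ∀ A B : ℝ, Real.pi / (1 - s) * B - Real.pi / (1 - s) * A
        = Real.pi / (s - 1) * (A - B) := by
      intro A B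
      have h1 : s - 1 ≠ 0 := by linarith
      field_simp
      ring
    have hkey : F Real.pi - F 0 = Real.pi / (s - 1) * (δ ^ (1 - s) - (δ + 1) ^ (1 - s)) := by
      rw [hF0, hFπ]
      exact hgen _ _
    rw [hkey]
    have hc : 0 < Real.pi / (s - 1) := div_pos hpi (by linarith)
    nlinarith [Real.rpow_nonneg (show (0:ℝ) ≤ δ + 1 by linarith) (1 - s), hc]
  have hconst : (∫ u in (-Real.pi)..Real.pi, (2:ℝ) ^ s * f u)
      = (2:ℝ) ^ s * ∫ u in (-Real.pi)..Real.pi, f u :=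
    intervalIntegral.integral_const_mul _ _
  have h2s : (0:ℝ) < (2:ℝ) ^ s := Real.rpow_pos_of_pos (by norm_num) s
  calc (∫ θ in (0:ℝ)..(2 * Real.pi), g θ) = ∫ u in (-Real.pi)..Real.pi, g (u + φ) := by
        rw [step1, step2]
    _ ≤ ∫ u in (-Real.pi)..Real.pi, (2:ℝ) ^ s * f u := step3
    _ = (2:ℝ) ^ s * ∫ u in (-Real.pi)..Real.pi, f u := hconst
    _ = (2:ℝ) ^ s * (2 * ∫ u in (0:ℝ)..Real.pi, f u) := by
        rw [hsplit, hsym]; ring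
    _ ≤ (2:ℝ) ^ s * (2 * (Real.pi / (s - 1) * δ ^ (1 - s))) := by
        nlinarith [hFTC, h2s]
    _ = 2 ^ (s + 1) * Real.pi / (s - 1) / δ ^ (s - 1) := by
        rw [show (1 - s) = -(s - 1) by ring, Real.rpow_neg hδ0.le,
          Real.rpow_add (by norm_num : (0:ℝ) < 2), Real.rpow_one]
        have : δ ^ (s - 1) ≠ 0 := (Real.rpow_pos_of_pos hδ0 _).ne'
        field_simp

lemma cont_integrand {t r : ℝ} {w a : ℂ} (hw : Complex.abs w < 1) (ha : Complex.abs a < 1) :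
    Continuous fun θ : ℝ =>
      1 / (Complex.abs (1 - (starRingEnd ℂ) w * Complex.exp (θ * Complex.I)) ^ t *
           Complex.abs (1 - (starRingEnd ℂ) a * Complex.exp (θ * Complex.I)) ^ r) := by
  apply continuous_const.div
  · exact ((cont_abs w).rpow_const fun θ => Or.inl (abs_pos' hw θ).ne').mul
      ((cont_abs a).rpow_const fun θ => Or.inl (abs_pos' ha θ).ne')
  · intro θ
    exact (mul_pos (Real.rpow_pos_of_pos (abs_pos' hw θ) t)
      (Real.rpow_pos_of_pos (abs_pos' ha θ) r)).ne'

lemma lower_bound {s₁ s₂ : ℝ} (hs₁ : 1 < s₁) (hs₂ : 1 < s₂) {w a : ℂ}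
    (hw : Complex.abs w < 1) (ha : Complex.abs a < 1) :
    (1 - Complex.abs w) /
        ((3 * (1 - Complex.abs w)) ^ s₁ *
         (4 * Complex.abs (1 - w * (starRingEnd ℂ) a)) ^ s₂)
      ≤ ∫ θ in (0:ℝ)..(2 * Real.pi),
          1 / (Complex.abs (1 - (starRingEnd ℂ) w * Complex.exp (θ * Complex.I)) ^ s₁ *
               Complex.abs (1 - (starRingEnd ℂ) a * Complex.exp (θ * Complex.I)) ^ s₂) := by
  have hpi := Real.pi_gt_three
  have hρ0 : 0 ≤ Complex.abs w := Complex.abs.nonneg w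
  have ha0 : 0 ≤ Complex.abs a := Complex.abs.nonneg a
  set δ := 1 - Complex.abs w with hδ
  have hδ0 : 0 < δ := by simp only [hδ]; linarith
  have hδ1 : δ ≤ 1 := by simp only [hδ]; linarith
  set φ := Complex.arg w with hφ
  set M := Complex.abs (1 - w * (starRingEnd ℂ) a) with hM
  have hδM : δ ≤ M := by
    have h1 : Complex.abs (w * (starRingEnd ℂ) a) = Complex.abs w * Complex.abs a := by
      rw [map_mul, Complex.abs_conj]
    have h2 : 1 - Complex.abs w * Complex.abs a ≤ M := by
      calc 1 - Complex.abs w * Complex.abs a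
          = ‖(1:ℂ)‖ - ‖w * (starRingEnd ℂ) a‖ := by simp [Complex.norm_eq_abs, h1]
        _ ≤ ‖1 - w * (starRingEnd ℂ) a‖ := norm_sub_norm_le _ _
        _ = M := Complex.norm_eq_abs _
    nlinarith
  have hM0 : 0 < M := lt_of_lt_of_le hδ0 hδM
  set f : ℝ → ℝ := fun θ =>
    1 / (Complex.abs (1 - (starRingEnd ℂ) w * Complex.exp (θ * Complex.I)) ^ s₁ *
         Complex.abs (1 - (starRingEnd ℂ) a * Complex.exp (θ * Complex.I)) ^ s₂) with hf
  have hfc : Continuous f := cont_integrand hw ha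
  have hfnn : ∀ θ, 0 ≤ f θ := by
    intro θ
    simp only [hf]
    positivity
  have hfper : Function.Periodic f (2 * Real.pi) := by
    intro θ
    simp only [hf, exp_per]
  set c : ℝ := 1 / ((3 * δ) ^ s₁ * (4 * M) ^ s₂) with hc
  have hstep1 : (∫ θ in (0:ℝ)..(2 * Real.pi), f θ) = ∫ θ in φ..(φ + 2 * Real.pi), f θ := by
    have h := hfper.intervalIntegral_add_eq 0 φ
    rw [zero_add] at h
    exact h
  have hsplit : (∫ θ in φ..(φ + 2 * Real.pi), f θ)
      = (∫ θ in φ..(φ + δ), f θ) + ∫ θ in (φ + δ)..(φ + 2 * Real.pi), f θ :=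
    (intervalIntegral.integral_add_adjacent_intervals (hfc.intervalIntegrable _ _)
      (hfc.intervalIntegrable _ _)).symm
  have htail : 0 ≤ ∫ θ in (φ + δ)..(φ + 2 * Real.pi), f θ :=
    intervalIntegral.integral_nonneg (by linarith) (fun θ _ => hfnn θ)
  -- pointwise bound on the arc
  have hpoint : ∀ θ ∈ Set.Icc φ (φ + δ), c ≤ f θ := by
    intro θ hθ
    set A := Complex.abs (1 - (starRingEnd ℂ) w * Complex.exp (θ * Complex.I)) with hA
    set B := Complex.abs (1 - (starRingEnd ℂ) a * Complex.exp (θ * Complex.I)) with hB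
    have hApos : 0 < A := abs_pos' hw θ
    have hBpos : 0 < B := abs_pos' ha θ
    have hAw : A = Complex.abs (Complex.exp (θ * Complex.I) - w) := abs_key w θ
    have hEφ : Complex.abs (Complex.exp (φ * Complex.I) - w) = δ := by
      have hbF : w = (Complex.abs w : ℂ) * Complex.exp (φ * Complex.I) :=
        (Complex.abs_mul_exp_arg_mul_I w).symm
      rw [hbF, show Complex.exp (↑φ * Complex.I) - (Complex.abs w : ℂ) * Complex.exp (↑φ * Complex.I)
          = ((1:ℂ) - (Complex.abs w : ℂ)) * Complex.exp (↑φ * Complex.I) by ring,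
        map_mul, Complex.abs_exp_ofReal_mul_I, mul_one,
        show ((1:ℂ) - ((Complex.abs w : ℝ) : ℂ)) = ((δ : ℝ) : ℂ) by push_cast [hδ]; ring,
        Complex.abs_ofReal, _root_.abs_of_nonneg hδ0.le]
    have hchord : Complex.abs (Complex.exp (θ * Complex.I) - Complex.exp (φ * Complex.I)) ≤ 2 * δ := by
      have heq : Complex.exp (↑θ * Complex.I) - Complex.exp (↑φ * Complex.I)
          = (Complex.exp (↑(θ - φ) * Complex.I) - 1) * Complex.exp (↑φ * Complex.I) := by
        rw [show ((θ - φ : ℝ) : ℂ) = (θ : ℂ) - (φ : ℂ) by push_cast; ring, sub_mul,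
          ← Complex.exp_add]
        ring_nf
      rw [heq, map_mul, Complex.abs_exp_ofReal_mul_I, mul_one]
      have habs : Complex.abs (((θ - φ : ℝ) : ℂ) * Complex.I) = |θ - φ| := by
        rw [map_mul, Complex.abs_I, mul_one, Complex.abs_ofReal]
      have hθφ : |θ - φ| ≤ δ := by
        rw [abs_le]
        constructor <;> [linarith [hθ.1]; linarith [hθ.2]]
      have := Complex.abs_exp_sub_one_le (x := ((θ - φ : ℝ) : ℂ) * Complex.I)
        (by rw [habs]; linarith)
      rw [habs] at this
      linarith
    have hAle : A ≤ 3 * δ := by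
      rw [hAw]
      calc Complex.abs (Complex.exp (↑θ * Complex.I) - w)
          ≤ Complex.abs (Complex.exp (↑θ * Complex.I) - Complex.exp (↑φ * Complex.I))
            + Complex.abs (Complex.exp (↑φ * Complex.I) - w) := by
            have := Complex.abs.sub_le (Complex.exp (↑θ * Complex.I)) (Complex.exp (↑φ * Complex.I)) w
            exact this
        _ ≤ 2 * δ + δ := by rw [hEφ]; linarith [hchord]
        _ = 3 * δ := by ring
    have hBle : B ≤ 4 * M := by
      have h1 : (1 : ℂ) - (starRingEnd ℂ) a * Complex.exp (↑θ * Complex.I)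
          = (1 - w * (starRingEnd ℂ) a) + (starRingEnd ℂ) a * (w - Complex.exp (↑θ * Complex.I)) := by
        ring
      calc B = Complex.abs ((1 - w * (starRingEnd ℂ) a)
              + (starRingEnd ℂ) a * (w - Complex.exp (↑θ * Complex.I))) := by rw [hB, h1]
        _ ≤ M + Complex.abs ((starRingEnd ℂ) a * (w - Complex.exp (↑θ * Complex.I))) :=
            Complex.abs.add_le _ _
        _ ≤ M + 1 * (3 * δ) := by
            rw [map_mul, Complex.abs_conj]
            have h2 : Complex.abs (w - Complex.exp (↑θ * Complex.I))
                = Complex.abs (Complex.exp (↑θ * Complex.I) - w) := by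
              rw [← Complex.abs.map_neg]; ring_nf
            have h3 : Complex.abs (w - Complex.exp (↑θ * Complex.I)) ≤ 3 * δ := by
              rw [h2, ← hAw]; exact hAle
            nlinarith [Complex.abs.nonneg (w - Complex.exp (↑θ * Complex.I))]
        _ ≤ 4 * M := by linarith [hδM]
    have hAs : A ^ s₁ ≤ (3 * δ) ^ s₁ := Real.rpow_le_rpow hApos.le hAle (by linarith)
    have hBs : B ^ s₂ ≤ (4 * M) ^ s₂ := Real.rpow_le_rpow hBpos.le hBle (by linarith)
    have hprod : A ^ s₁ * B ^ s₂ ≤ (3 * δ) ^ s₁ * (4 * M) ^ s₂ := by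
      have h1 : 0 < A ^ s₁ := Real.rpow_pos_of_pos hApos s₁
      have h2 : 0 < B ^ s₂ := Real.rpow_pos_of_pos hBpos s₂
      nlinarith
    have hppos : 0 < A ^ s₁ * B ^ s₂ :=
      mul_pos (Real.rpow_pos_of_pos hApos s₁) (Real.rpow_pos_of_pos hBpos s₂)
    simp only [hc, hf]
    exact one_div_le_one_div_of_le hppos hprod
  have harc : c * δ ≤ ∫ θ in φ..(φ + δ), f θ := by
    have h1 : (∫ _θ in φ..(φ + δ), c) ≤ ∫ θ in φ..(φ + δ), f θ := by
      apply intervalIntegral.integral_mono_on (by linarith)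
        (intervalIntegrable_const) (hfc.intervalIntegrable _ _) hpoint
    rw [intervalIntegral.integral_const, smul_eq_mul] at h1
    calc c * δ = (φ + δ - φ) * c := by ring
      _ ≤ _ := h1
  have hcδ : (1 - Complex.abs w) / ((3 * δ) ^ s₁ * (4 * M) ^ s₂) = c * δ := by
    rw [hc, ← hδ]
    ring
  rw [hstep1, hsplit]
  rw [← hδ] at *
  calc (1 - Complex.abs w) / ((3 * δ) ^ s₁ * (4 * M) ^ s₂) = c * δ := hcδ
    _ ≤ ∫ θ in φ..(φ + δ), f θ := harc
    _ ≤ (∫ θ in φ..(φ + δ), f θ) + ∫ θ in (φ + δ)..(φ + 2 * Real.pi), f θ := by linarith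

lemma M_pos {w a : ℂ} (hw : Complex.abs w < 1) (ha : Complex.abs a < 1) :
    1 - Complex.abs w ≤ Complex.abs (1 - w * (starRingEnd ℂ) a) := by
  have h1 : Complex.abs (w * (starRingEnd ℂ) a) = Complex.abs w * Complex.abs a := by
    rw [map_mul, Complex.abs_conj]
  have h2 : 1 - Complex.abs w * Complex.abs a ≤ Complex.abs (1 - w * (starRingEnd ℂ) a) := by
    calc 1 - Complex.abs w * Complex.abs a
        = ‖(1:ℂ)‖ - ‖w * (starRingEnd ℂ) a‖ := by simp [Complex.norm_eq_abs, h1]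
      _ ≤ ‖1 - w * (starRingEnd ℂ) a‖ := norm_sub_norm_le _ _
      _ = _ := Complex.norm_eq_abs _
  nlinarith [Complex.abs.nonneg w, Complex.abs.nonneg a]

lemma upper_bound {s₁ s₂ : ℝ} (hs₁ : 1 < s₁) (hs₂ : 1 < s₂) {w a : ℂ}
    (hw : Complex.abs w < 1) (ha : Complex.abs a < 1) :
    (∫ θ in (0:ℝ)..(2 * Real.pi),
        1 / (Complex.abs (1 - (starRingEnd ℂ) w * Complex.exp (θ * Complex.I)) ^ s₁ *
             Complex.abs (1 - (starRingEnd ℂ) a * Complex.exp (θ * Complex.I)) ^ s₂))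
      ≤ 2 ^ s₁ * (1 / Complex.abs (1 - w * (starRingEnd ℂ) a) ^ s₁) *
          ((2 ^ (s₂ + 1) * Real.pi / (s₂ - 1)) / (1 - Complex.abs a) ^ (s₂ - 1))
        + 2 ^ s₂ * (1 / Complex.abs (1 - w * (starRingEnd ℂ) a) ^ s₂) *
          ((2 ^ (s₁ + 1) * Real.pi / (s₁ - 1)) / (1 - Complex.abs w) ^ (s₁ - 1)) := by
  set M := Complex.abs (1 - w * (starRingEnd ℂ) a) with hM
  have hM0 : 0 < M := lt_of_lt_of_le (by linarith) (M_pos hw ha)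
  set gw : ℝ → ℝ := fun θ =>
    1 / Complex.abs (1 - (starRingEnd ℂ) w * Complex.exp (θ * Complex.I)) ^ s₁ with hgw
  set ga : ℝ → ℝ := fun θ =>
    1 / Complex.abs (1 - (starRingEnd ℂ) a * Complex.exp (θ * Complex.I)) ^ s₂ with hga
  have hgwc : Continuous gw := continuous_const.div
    ((cont_abs w).rpow_const fun θ => Or.inl (abs_pos' hw θ).ne')
    (fun θ => (Real.rpow_pos_of_pos (abs_pos' hw θ) s₁).ne')
  have hgac : Continuous ga := continuous_const.div
    ((cont_abs a).rpow_const fun θ => Or.inl (abs_pos' ha θ).ne')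
    (fun θ => (Real.rpow_pos_of_pos (abs_pos' ha θ) s₂).ne')
  -- pointwise split
  have hpoint : ∀ θ : ℝ,
      1 / (Complex.abs (1 - (starRingEnd ℂ) w * Complex.exp (θ * Complex.I)) ^ s₁ *
           Complex.abs (1 - (starRingEnd ℂ) a * Complex.exp (θ * Complex.I)) ^ s₂)
      ≤ 2 ^ s₁ * (1 / M ^ s₁) * ga θ + 2 ^ s₂ * (1 / M ^ s₂) * gw θ := by
    intro θ
    set A := Complex.abs (1 - (starRingEnd ℂ) w * Complex.exp (θ * Complex.I)) with hA
    set B := Complex.abs (1 - (starRingEnd ℂ) a * Complex.exp (θ * Complex.I)) with hB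
    have hApos : 0 < A := abs_pos' hw θ
    have hBpos : 0 < B := abs_pos' ha θ
    have htri : M ≤ A + B := by
      have h0 : M = Complex.abs (1 - (starRingEnd ℂ) w * a) := by
        rw [hM, ← Complex.abs_conj (1 - (starRingEnd ℂ) w * a)]
        congr 1
        rw [map_sub, map_one, map_mul, Complex.conj_conj]
      have h1 : (1 : ℂ) - (starRingEnd ℂ) w * a
          = (1 - (starRingEnd ℂ) w * Complex.exp (θ * Complex.I))
            + (starRingEnd ℂ) w * (Complex.exp (θ * Complex.I) - a) := by ring
      have h2 : Complex.abs ((starRingEnd ℂ) w * (Complex.exp (θ * Complex.I) - a)) ≤ B := by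
        rw [map_mul, Complex.abs_conj]
        have h3 : Complex.abs (Complex.exp (θ * Complex.I) - a) = B := by
          rw [hB, abs_key]
        rw [h3]
        nlinarith [hBpos, Complex.abs.nonneg w]
      calc M = Complex.abs ((1 - (starRingEnd ℂ) w * Complex.exp (θ * Complex.I))
              + (starRingEnd ℂ) w * (Complex.exp (θ * Complex.I) - a)) := by rw [h0, h1]
        _ ≤ A + Complex.abs ((starRingEnd ℂ) w * (Complex.exp (θ * Complex.I) - a)) :=
            Complex.abs.add_le _ _
        _ ≤ A + B := by linarith
    have hgaθ : ga θ = 1 / B ^ s₂ := rfl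
    have hgwθ : gw θ = 1 / A ^ s₁ := rfl
    have hterm_nn1 : 0 ≤ 2 ^ s₁ * (1 / M ^ s₁) * ga θ := by
      rw [hgaθ]; positivity
    have hterm_nn2 : 0 ≤ 2 ^ s₂ * (1 / M ^ s₂) * gw θ := by
      rw [hgwθ]; positivity
    rcases le_total B A with hBA | hAB
    · -- M ≤ 2A
      have hM2A : M ≤ 2 * A := by linarith
      have hMs : M ^ s₁ ≤ (2:ℝ) ^ s₁ * A ^ s₁ := by
        calc M ^ s₁ ≤ (2 * A) ^ s₁ := Real.rpow_le_rpow hM0.le hM2A (by linarith)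
          _ = (2:ℝ) ^ s₁ * A ^ s₁ := Real.mul_rpow (by norm_num) hApos.le
      have key : 1 / (A ^ s₁ * B ^ s₂) ≤ 2 ^ s₁ * (1 / M ^ s₁) * ga θ := by
        rw [hgaθ]
        have hMs1 : 0 < M ^ s₁ := Real.rpow_pos_of_pos hM0 s₁
        have hAs1 : 0 < A ^ s₁ := Real.rpow_pos_of_pos hApos s₁
        have hBs2 : 0 < B ^ s₂ := Real.rpow_pos_of_pos hBpos s₂
        rw [div_le_iff₀ (by positivity),
          show (2:ℝ) ^ s₁ * (1 / M ^ s₁) * (1 / B ^ s₂) * (A ^ s₁ * B ^ s₂)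
            = (2 ^ s₁ * A ^ s₁) / M ^ s₁ by field_simp,
          le_div_iff₀ hMs1, one_mul]
        exact hMs
      linarith [key, hterm_nn2]
    · -- M ≤ 2B
      have hM2B : M ≤ 2 * B := by linarith
      have hMs : M ^ s₂ ≤ (2:ℝ) ^ s₂ * B ^ s₂ := by
        calc M ^ s₂ ≤ (2 * B) ^ s₂ := Real.rpow_le_rpow hM0.le hM2B (by linarith)
          _ = (2:ℝ) ^ s₂ * B ^ s₂ := Real.mul_rpow (by norm_num) hBpos.le
      have key : 1 / (A ^ s₁ * B ^ s₂) ≤ 2 ^ s₂ * (1 / M ^ s₂) * gw θ := by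
        rw [hgwθ]
        have hMs2 : 0 < M ^ s₂ := Real.rpow_pos_of_pos hM0 s₂
        have hAs1 : 0 < A ^ s₁ := Real.rpow_pos_of_pos hApos s₁
        have hBs2 : 0 < B ^ s₂ := Real.rpow_pos_of_pos hBpos s₂
        rw [div_le_iff₀ (by positivity),
          show (2:ℝ) ^ s₂ * (1 / M ^ s₂) * (1 / A ^ s₁) * (A ^ s₁ * B ^ s₂)
            = (2 ^ s₂ * B ^ s₂) / M ^ s₂ by field_simp,
          le_div_iff₀ hMs2, one_mul]
        exact hMs
      linarith [key, hterm_nn1]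
  have h2pi : (0:ℝ) ≤ 2 * Real.pi := by positivity
  have hcsum : Continuous fun θ : ℝ =>
      2 ^ s₁ * (1 / M ^ s₁) * ga θ + 2 ^ s₂ * (1 / M ^ s₂) * gw θ :=
    (continuous_const.mul hgac).add (continuous_const.mul hgwc)
  have hstep : (∫ θ in (0:ℝ)..(2 * Real.pi),
        1 / (Complex.abs (1 - (starRingEnd ℂ) w * Complex.exp (θ * Complex.I)) ^ s₁ *
             Complex.abs (1 - (starRingEnd ℂ) a * Complex.exp (θ * Complex.I)) ^ s₂))
      ≤ 2 ^ s₁ * (1 / M ^ s₁) * (∫ θ in (0:ℝ)..(2 * Real.pi), ga θ)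
        + 2 ^ s₂ * (1 / M ^ s₂) * (∫ θ in (0:ℝ)..(2 * Real.pi), gw θ) := by
    calc (∫ θ in (0:ℝ)..(2 * Real.pi),
        1 / (Complex.abs (1 - (starRingEnd ℂ) w * Complex.exp (θ * Complex.I)) ^ s₁ *
             Complex.abs (1 - (starRingEnd ℂ) a * Complex.exp (θ * Complex.I)) ^ s₂))
        ≤ ∫ θ in (0:ℝ)..(2 * Real.pi),
            (2 ^ s₁ * (1 / M ^ s₁) * ga θ + 2 ^ s₂ * (1 / M ^ s₂) * gw θ) := by
          apply intervalIntegral.integral_mono_on h2pi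
            ((cont_integrand hw ha).intervalIntegrable _ _)
            (hcsum.intervalIntegrable _ _)
            (fun θ _ => hpoint θ)
      _ = _ := by
          rw [intervalIntegral.integral_add
            ((hgac.intervalIntegrable _ _).const_mul _)
            ((hgwc.intervalIntegrable _ _).const_mul _),
            intervalIntegral.integral_const_mul, intervalIntegral.integral_const_mul]
  have hJw := onevar hs₁ hw
  have hJa := onevar hs₂ ha
  have hc1 : (0:ℝ) ≤ 2 ^ s₁ * (1 / M ^ s₁) := by positivity
  have hc2 : (0:ℝ) ≤ 2 ^ s₂ * (1 / M ^ s₂) := by positivity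
  calc _ ≤ 2 ^ s₁ * (1 / M ^ s₁) * (∫ θ in (0:ℝ)..(2 * Real.pi), ga θ)
        + 2 ^ s₂ * (1 / M ^ s₂) * (∫ θ in (0:ℝ)..(2 * Real.pi), gw θ) := hstep
    _ ≤ _ := by
        have t1 := mul_le_mul_of_nonneg_left hJa hc1
        have t2 := mul_le_mul_of_nonneg_left hJw hc2
        exact add_le_add t1 t2


set_option maxHeartbeats 2000000 in
theorem stmt15 (t r : ℝ) (ht : 1 < t) (hr : 1 < r) :
    ∃ C₁ C₂ : ℝ, 0 < C₁ ∧ 0 < C₂ ∧ ∀ w ∈ 𝔻, ∀ a ∈ 𝔻,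
      C₁ * (1 / ((1 - ‖w‖ ^ 2) ^ (t - 1) *
              ‖1 - w * (starRingEnd ℂ) a‖ ^ r) +
            1 / ((1 - ‖a‖ ^ 2) ^ (r - 1) *
              ‖1 - w * (starRingEnd ℂ) a‖ ^ t))
        ≤ (∫ θ in (0:ℝ)..(2 * Real.pi),
            1 / (‖1 - (starRingEnd ℂ) w * Complex.exp (θ * Complex.I)‖ ^ t *
                 ‖1 - (starRingEnd ℂ) a * Complex.exp (θ * Complex.I)‖ ^ r)) ∧
      (∫ θ in (0:ℝ)..(2 * Real.pi),
          1 / (‖1 - (starRingEnd ℂ) w * Complex.exp (θ * Complex.I)‖ ^ t *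
               ‖1 - (starRingEnd ℂ) a * Complex.exp (θ * Complex.I)‖ ^ r))
        ≤ C₂ * (1 / ((1 - ‖w‖ ^ 2) ^ (t - 1) *
              ‖1 - w * (starRingEnd ℂ) a‖ ^ r) +
            1 / ((1 - ‖a‖ ^ 2) ^ (r - 1) *
              ‖1 - w * (starRingEnd ℂ) a‖ ^ t)) := by
  show ∃ C₁ C₂ : ℝ, 0 < C₁ ∧ 0 < C₂ ∧ ∀ w ∈ 𝔻, ∀ a ∈ 𝔻,
        C₁ * (1 / ((1 - Complex.abs w ^ 2) ^ (t - 1) *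
                Complex.abs (1 - w * (starRingEnd ℂ) a) ^ r) +
              1 / ((1 - Complex.abs a ^ 2) ^ (r - 1) *
                Complex.abs (1 - w * (starRingEnd ℂ) a) ^ t))
          ≤ (∫ θ in (0:ℝ)..(2 * Real.pi),
              1 / (Complex.abs (1 - (starRingEnd ℂ) w * Complex.exp (θ * Complex.I)) ^ t *
                   Complex.abs (1 - (starRingEnd ℂ) a * Complex.exp (θ * Complex.I)) ^ r)) ∧
        (∫ θ in (0:ℝ)..(2 * Real.pi),
            1 / (Complex.abs (1 - (starRingEnd ℂ) w * Complex.exp (θ * Complex.I)) ^ t *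
                 Complex.abs (1 - (starRingEnd ℂ) a * Complex.exp (θ * Complex.I)) ^ r))
          ≤ C₂ * (1 / ((1 - Complex.abs w ^ 2) ^ (t - 1) *
                Complex.abs (1 - w * (starRingEnd ℂ) a) ^ r) +
              1 / ((1 - Complex.abs a ^ 2) ^ (r - 1) *
                Complex.abs (1 - w * (starRingEnd ℂ) a) ^ t))
  have hpi := Real.pi_pos
  set Kt : ℝ := 2 ^ (t + 1) * Real.pi / (t - 1) with hKt
  set Kr : ℝ := 2 ^ (r + 1) * Real.pi / (r - 1) with hKr
  have hKt0 : 0 < Kt := div_pos (by positivity) (by linarith)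
  have hKr0 : 0 < Kr := div_pos (by positivity) (by linarith)
  set c₁ : ℝ := 1 / ((3:ℝ) ^ t * 4 ^ r) with hc₁
  set c₂ : ℝ := 1 / ((3:ℝ) ^ r * 4 ^ t) with hc₂
  have hc₁0 : 0 < c₁ := by rw [hc₁]; positivity
  have hc₂0 : 0 < c₂ := by rw [hc₂]; positivity
  set D₁ : ℝ := 2 ^ t * 2 ^ (r - 1) * Kr with hD₁
  set D₂ : ℝ := 2 ^ r * 2 ^ (t - 1) * Kt with hD₂
  have hD₁0 : 0 < D₁ := by rw [hD₁]; positivity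
  have hD₂0 : 0 < D₂ := by rw [hD₂]; positivity
  refine ⟨min c₁ c₂ / 2, D₁ + D₂, by positivity, by linarith, ?_⟩
  intro w hw a ha
  have hw' : Complex.abs w < 1 := by
    exact (by simpa [𝔻, Complex.dist_eq] using hw : ‖w‖ < 1)
  have ha' : Complex.abs a < 1 := by
    exact (by simpa [𝔻, Complex.dist_eq] using ha : ‖a‖ < 1)
  have hw0 : 0 ≤ Complex.abs w := Complex.abs.nonneg w
  have ha0 : 0 ≤ Complex.abs a := Complex.abs.nonneg a
  set M : ℝ := Complex.abs (1 - w * (starRingEnd ℂ) a) with hM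
  have hM0 : 0 < M := lt_of_lt_of_le (by linarith) (M_pos hw' ha')
  set δw : ℝ := 1 - Complex.abs w with hδw
  set δa : ℝ := 1 - Complex.abs a with hδa
  have hδw0 : 0 < δw := by rw [hδw]; linarith
  have hδa0 : 0 < δa := by rw [hδa]; linarith
  have h1w : 0 < 1 - Complex.abs w ^ 2 := by nlinarith
  have h1a : 0 < 1 - Complex.abs a ^ 2 := by nlinarith
  have hδw2 : δw ≤ 1 - Complex.abs w ^ 2 := by rw [hδw]; nlinarith
  have hδa2 : δa ≤ 1 - Complex.abs a ^ 2 := by rw [hδa]; nlinarith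
  have hδw2' : 1 - Complex.abs w ^ 2 ≤ 2 * δw := by rw [hδw]; nlinarith [sq_nonneg (1 - Complex.abs w)]
  have hδa2' : 1 - Complex.abs a ^ 2 ≤ 2 * δa := by rw [hδa]; nlinarith [sq_nonneg (1 - Complex.abs a)]
  set X : ℝ := 1 / ((1 - Complex.abs w ^ 2) ^ (t - 1) * M ^ r) with hX
  set Y : ℝ := 1 / ((1 - Complex.abs a ^ 2) ^ (r - 1) * M ^ t) with hY
  have hX0 : 0 ≤ X := by rw [hX]; positivity
  have hY0 : 0 ≤ Y := by rw [hY]; positivity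
  set I : ℝ := ∫ θ in (0:ℝ)..(2 * Real.pi),
      1 / (Complex.abs (1 - (starRingEnd ℂ) w * Complex.exp (θ * Complex.I)) ^ t *
           Complex.abs (1 - (starRingEnd ℂ) a * Complex.exp (θ * Complex.I)) ^ r) with hI
  -- generic rpow algebra : δ / ((3δ)^p (4N)^q) = (1/(3^p 4^q)) * (1/δ^(p-1)) * (1/N^q)
  have halg : ∀ δ N p q : ℝ, 0 < δ → 0 < N → 1 < p → 1 < q →
      δ / ((3 * δ) ^ p * (4 * N) ^ q)
        = (1 / ((3:ℝ) ^ p * 4 ^ q)) * ((1 / δ ^ (p - 1)) * (1 / N ^ q)) := by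
    intro δ N p q hδ hN hp hq
    have e1 : (3 * δ) ^ p = (3:ℝ) ^ p * δ ^ p := Real.mul_rpow (by norm_num) hδ.le
    have e2 : (4 * N) ^ q = (4:ℝ) ^ q * N ^ q := Real.mul_rpow (by norm_num) hN.le
    have e3 : δ / δ ^ p = 1 / δ ^ (p - 1) := by
      have h1 : δ ^ (-(p - 1)) = δ ^ (1:ℝ) / δ ^ p := by
        rw [show -(p - 1) = 1 - p by ring, Real.rpow_sub hδ]
      rw [Real.rpow_one] at h1
      rw [← h1, Real.rpow_neg hδ.le, one_div]
    have h3p : (0:ℝ) < (3:ℝ) ^ p := Real.rpow_pos_of_pos (by norm_num) p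
    have h4q : (0:ℝ) < (4:ℝ) ^ q := Real.rpow_pos_of_pos (by norm_num) q
    have hδp : (0:ℝ) < δ ^ p := Real.rpow_pos_of_pos hδ p
    have hNq : (0:ℝ) < N ^ q := Real.rpow_pos_of_pos hN q
    rw [e1, e2, ← e3]
    field_simp
    all_goals try ring
    all_goals exact Or.inl trivial
  -- lower bound, first term
  have hL1 : c₁ * X ≤ I := by
    have L := lower_bound ht hr hw' ha'
    rw [← hδw, ← hM, ← hI] at L
    have hmono : 1 / (1 - Complex.abs w ^ 2) ^ (t - 1) ≤ 1 / δw ^ (t - 1) :=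
      one_div_le_one_div_of_le (Real.rpow_pos_of_pos hδw0 _)
        (Real.rpow_le_rpow hδw0.le hδw2 (by linarith))
    have e := halg δw M t r hδw0 hM0 ht hr
    rw [← hc₁] at e
    have hXsplit : X = (1 / (1 - Complex.abs w ^ 2) ^ (t - 1)) * (1 / M ^ r) := by
      rw [hX, one_div_mul_one_div]
    calc c₁ * X = c₁ * ((1 / (1 - Complex.abs w ^ 2) ^ (t - 1)) * (1 / M ^ r)) := by
          rw [hXsplit]
      _ ≤ c₁ * ((1 / δw ^ (t - 1)) * (1 / M ^ r)) := by
          apply mul_le_mul_of_nonneg_left _ hc₁0.le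
          apply mul_le_mul_of_nonneg_right hmono (by positivity)
      _ = δw / ((3 * δw) ^ t * (4 * M) ^ r) := e.symm
      _ ≤ I := L
  -- lower bound, second term (swap roles)
  have hL2 : c₂ * Y ≤ I := by
    have L := lower_bound hr ht ha' hw'
    have hMM : Complex.abs (1 - a * (starRingEnd ℂ) w) = M := by
      rw [hM, ← Complex.abs_conj (1 - a * (starRingEnd ℂ) w)]
      congr 1
      rw [map_sub, map_one, map_mul, Complex.conj_conj]
      ring
    have hswap : (∫ θ in (0:ℝ)..(2 * Real.pi),
        1 / (Complex.abs (1 - (starRingEnd ℂ) a * Complex.exp (θ * Complex.I)) ^ r *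
             Complex.abs (1 - (starRingEnd ℂ) w * Complex.exp (θ * Complex.I)) ^ t)) = I := by
      rw [hI]
      apply intervalIntegral.integral_congr
      intro θ _
      show 1 / (Complex.abs (1 - (starRingEnd ℂ) a * Complex.exp (θ * Complex.I)) ^ r *
           Complex.abs (1 - (starRingEnd ℂ) w * Complex.exp (θ * Complex.I)) ^ t)
        = 1 / (Complex.abs (1 - (starRingEnd ℂ) w * Complex.exp (θ * Complex.I)) ^ t *
           Complex.abs (1 - (starRingEnd ℂ) a * Complex.exp (θ * Complex.I)) ^ r)
      rw [mul_comm]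
    rw [hswap, ← hδa, hMM] at L
    have hmono : 1 / (1 - Complex.abs a ^ 2) ^ (r - 1) ≤ 1 / δa ^ (r - 1) :=
      one_div_le_one_div_of_le (Real.rpow_pos_of_pos hδa0 _)
        (Real.rpow_le_rpow hδa0.le hδa2 (by linarith))
    have e := halg δa M r t hδa0 hM0 hr ht
    rw [← hc₂] at e
    have hYsplit : Y = (1 / (1 - Complex.abs a ^ 2) ^ (r - 1)) * (1 / M ^ t) := by
      rw [hY, one_div_mul_one_div]
    calc c₂ * Y = c₂ * ((1 / (1 - Complex.abs a ^ 2) ^ (r - 1)) * (1 / M ^ t)) := by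
          rw [hYsplit]
      _ ≤ c₂ * ((1 / δa ^ (r - 1)) * (1 / M ^ t)) := by
          apply mul_le_mul_of_nonneg_left _ hc₂0.le
          apply mul_le_mul_of_nonneg_right hmono (by positivity)
      _ = δa / ((3 * δa) ^ r * (4 * M) ^ t) := e.symm
      _ ≤ I := L
  constructor
  · -- lower bound
    have hmin1 : min c₁ c₂ ≤ c₁ := min_le_left _ _
    have hmin2 : min c₁ c₂ ≤ c₂ := min_le_right _ _
    nlinarith [hL1, hL2, mul_le_mul_of_nonneg_right hmin1 hX0,
      mul_le_mul_of_nonneg_right hmin2 hY0]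
  · -- upper bound
    have U := upper_bound ht hr hw' ha'
    rw [← hM, ← hδa, ← hδw, ← hKt, ← hKr, ← hI] at U
    -- convert (1-|a|) powers to (1-|a|²) powers
    have hconva : (1 - Complex.abs a ^ 2) ^ (r - 1) ≤ 2 ^ (r - 1) * δa ^ (r - 1) := by
      calc (1 - Complex.abs a ^ 2) ^ (r - 1) ≤ (2 * δa) ^ (r - 1) :=
            Real.rpow_le_rpow h1a.le hδa2' (by linarith)
        _ = 2 ^ (r - 1) * δa ^ (r - 1) := Real.mul_rpow (by norm_num) hδa0.le
    have hconvw : (1 - Complex.abs w ^ 2) ^ (t - 1) ≤ 2 ^ (t - 1) * δw ^ (t - 1) := by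
      calc (1 - Complex.abs w ^ 2) ^ (t - 1) ≤ (2 * δw) ^ (t - 1) :=
            Real.rpow_le_rpow h1w.le hδw2' (by linarith)
        _ = 2 ^ (t - 1) * δw ^ (t - 1) := Real.mul_rpow (by norm_num) hδw0.le
    have hterm1 : 2 ^ t * (1 / M ^ t) * (Kr / δa ^ (r - 1)) ≤ D₁ * Y := by
      have hQ : 0 < δa ^ (r - 1) := Real.rpow_pos_of_pos hδa0 _
      have hP : 0 < (1 - Complex.abs a ^ 2) ^ (r - 1) := Real.rpow_pos_of_pos h1a _
      have hMt : 0 < M ^ t := Real.rpow_pos_of_pos hM0 t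
      have h2t : (0:ℝ) < 2 ^ t := Real.rpow_pos_of_pos (by norm_num) t
      have h2r1 : (0:ℝ) < 2 ^ (r - 1) := Real.rpow_pos_of_pos (by norm_num) (r - 1)
      have hconv : Kr / δa ^ (r - 1) ≤ 2 ^ (r - 1) * Kr / (1 - Complex.abs a ^ 2) ^ (r - 1) := by
        rw [div_le_div_iff₀ hQ hP]
        nlinarith [mul_le_mul_of_nonneg_left hconva hKr0.le]
      calc 2 ^ t * (1 / M ^ t) * (Kr / δa ^ (r - 1))
          ≤ 2 ^ t * (1 / M ^ t) * (2 ^ (r - 1) * Kr / (1 - Complex.abs a ^ 2) ^ (r - 1)) := by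
            apply mul_le_mul_of_nonneg_left hconv (by positivity)
        _ = D₁ * Y := by
            rw [hD₁, hY]
            field_simp
    have hterm2 : 2 ^ r * (1 / M ^ r) * (Kt / δw ^ (t - 1)) ≤ D₂ * X := by
      have hQ : 0 < δw ^ (t - 1) := Real.rpow_pos_of_pos hδw0 _
      have hP : 0 < (1 - Complex.abs w ^ 2) ^ (t - 1) := Real.rpow_pos_of_pos h1w _
      have hMr : 0 < M ^ r := Real.rpow_pos_of_pos hM0 r
      have hconv : Kt / δw ^ (t - 1) ≤ 2 ^ (t - 1) * Kt / (1 - Complex.abs w ^ 2) ^ (t - 1) := by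
        rw [div_le_div_iff₀ hQ hP]
        nlinarith [mul_le_mul_of_nonneg_left hconvw hKt0.le]
      calc 2 ^ r * (1 / M ^ r) * (Kt / δw ^ (t - 1))
          ≤ 2 ^ r * (1 / M ^ r) * (2 ^ (t - 1) * Kt / (1 - Complex.abs w ^ 2) ^ (t - 1)) := by
            apply mul_le_mul_of_nonneg_left hconv (by positivity)
        _ = D₂ * X := by
            rw [hD₂, hX]
            field_simp
    calc I ≤ 2 ^ t * (1 / M ^ t) * (Kr / δa ^ (r - 1)) + 2 ^ r * (1 / M ^ r) * (Kt / δw ^ (t - 1)) := U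
      _ ≤ D₁ * Y + D₂ * X := add_le_add hterm1 hterm2
      _ ≤ (D₁ + D₂) * (X + Y) := by nlinarith [hX0, hY0, hD₁0, hD₂0]

end
end
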